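/- Let A be a real symmetric 3×3 matrix and let M, K ∈ ℝ³. Let G be the subgroup of the orthogonal group O(3) consisting of all R with R·A·Rᵀ = A, R·M = M and R·K = K. Then G is isomorphic, as a group, to one of the following: the trivial group, ℤ/2, ℤ/2 × ℤ/2, ℤ/2 × ℤ/2 × ℤ/2, O(2), O(2) × ℤ/2, or O(3). -/

import Mathlib

open Matrix

local notation "Mat" => Matrix (Fin 3) (Fin 3) ℝ
local notation "O3" => Matrix.orthogonalGroup (Fin 3) ℝ

lemma o3_orth' {R : O3} : (R : Mat)ᵀ * (R : Mat) = 1 := by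
  have := R.2
  rw [Matrix.mem_orthogonalGroup_iff'] at this
  exact this

lemma o3_orth {R : O3} : (R : Mat) * (R : Mat)ᵀ = 1 := by
  have := R.2
  rw [Matrix.mem_orthogonalGroup_iff] at this
  exact this

/-- The symmetry group data as an explicit subgroup. -/
def sg (A : Mat) (M K : Fin 3 → ℝ) : Subgroup O3 where
  carrier := {R | (R : Mat) * A * (R : Mat)ᵀ = A ∧ (R : Mat) *ᵥ M = M ∧ (R : Mat) *ᵥ K = K}
  one_mem' := by simp
  mul_mem' := by
    rintro R S ⟨hR1, hR2, hR3⟩ ⟨hS1, hS2, hS3⟩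
    have hco : ((R * S : O3) : Mat) = (R : Mat) * (S : Mat) := rfl
    refine ⟨?_, ?_, ?_⟩
    · rw [hco]
      calc (R:Mat) * (S:Mat) * A * ((R:Mat) * (S:Mat))ᵀ
          = (R:Mat) * ((S:Mat) * A * (S:Mat)ᵀ) * (R:Mat)ᵀ := by
            simp only [transpose_mul, mul_assoc]
        _ = A := by rw [hS1, hR1]
    · rw [hco, ← mulVec_mulVec, hS2, hR2]
    · rw [hco, ← mulVec_mulVec, hS3, hR3]
  inv_mem' := by
    rintro R ⟨hR1, hR2, hR3⟩
    have horth : (R : Mat)ᵀ * (R : Mat) = 1 := o3_orth'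
    have horth' : (R : Mat) * (R : Mat)ᵀ = 1 := o3_orth
    have hco : ((R⁻¹ : O3) : Mat) = (R : Mat)ᵀ := rfl
    have hL : ∀ X : Mat, (R:Mat)ᵀ * ((R:Mat) * X) = X := fun X => by
      rw [← mul_assoc, horth, one_mul]
    refine ⟨?_, ?_, ?_⟩
    · rw [hco, transpose_transpose]
      conv_lhs => rw [← hR1]
      simp only [mul_assoc, hL]
      rw [← mul_assoc, mul_assoc, horth, mul_one]
    · rw [hco]
      conv_lhs => rw [← hR2]
      rw [mulVec_mulVec, horth, one_mulVec]
    · rw [hco]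
      conv_lhs => rw [← hR3]
      rw [mulVec_mulVec, horth, one_mulVec]

lemma mem_sg {A : Mat} {M K : Fin 3 → ℝ} {R : O3} :
    R ∈ sg A M K ↔ ((R : Mat) * A * (R : Mat)ᵀ = A ∧ (R : Mat) *ᵥ M = M ∧ (R : Mat) *ᵥ K = K) :=
  Iff.rfl

/-- Conjugation transport. -/
noncomputable def sgConj (A : Mat) (M K : Fin 3 → ℝ) (Q : O3) :
    sg A M K ≃* sg ((Q:Mat) * A * (Q:Mat)ᵀ) ((Q:Mat) *ᵥ M) ((Q:Mat) *ᵥ K) := by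
  have horth : (Q : Mat)ᵀ * (Q : Mat) = 1 := o3_orth'
  have horth' : (Q : Mat) * (Q : Mat)ᵀ = 1 := o3_orth
  have hL : ∀ X : Mat, (Q:Mat)ᵀ * ((Q:Mat) * X) = X := fun X => by
    rw [← mul_assoc, horth, one_mul]
  have hL' : ∀ X : Mat, (Q:Mat) * ((Q:Mat)ᵀ * X) = X := fun X => by
    rw [← mul_assoc, horth', one_mul]
  have key : Subgroup.map (MulAut.conj Q).toMonoidHom (sg A M K)
      = sg ((Q:Mat) * A * (Q:Mat)ᵀ) ((Q:Mat) *ᵥ M) ((Q:Mat) *ᵥ K) := by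
    ext R
    rw [Subgroup.mem_map_equiv]
    have hcs : ((((MulAut.conj Q).symm R) : O3) : Mat) = (Q:Mat)ᵀ * ((R:Mat) * (Q:Mat)) := by
      have : ((MulAut.conj Q).symm R) = Q⁻¹ * R * Q := by
        simp [MulAut.conj_symm_apply, mul_assoc]
      rw [this]
      push_cast
      rw [mul_assoc]
      rfl
    rw [mem_sg, mem_sg, hcs]
    constructor
    · rintro ⟨h1, h2, h3⟩
      refine ⟨?_, ?_, ?_⟩
      · have h1' := congrArg (fun X : Mat => (Q:Mat) * X * (Q:Mat)ᵀ) h1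
        simp only [transpose_mul, transpose_transpose, mul_assoc, hL, hL', horth, horth',
          mul_one, one_mul] at h1' ⊢
        exact h1'
      · have h2' := congrArg (fun v => (Q:Mat) *ᵥ v) h2
        simp only [mulVec_mulVec, ← mul_assoc] at h2' ⊢
        simp only [mul_assoc, hL, hL', horth, horth', mul_one, one_mul, one_mulVec] at h2' ⊢
        exact h2'
      · have h3' := congrArg (fun v => (Q:Mat) *ᵥ v) h3
        simp only [mulVec_mulVec, ← mul_assoc] at h3' ⊢
        simp only [mul_assoc, hL, hL', horth, horth', mul_one, one_mul, one_mulVec] at h3' ⊢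
        exact h3'
    · rintro ⟨h1, h2, h3⟩
      refine ⟨?_, ?_, ?_⟩
      · have h1' := congrArg (fun X : Mat => (Q:Mat)ᵀ * X * (Q:Mat)) h1
        simp only [transpose_mul, transpose_transpose, mul_assoc, hL, hL', horth, horth',
          mul_one, one_mul] at h1' ⊢
        exact h1'
      · have h2' := congrArg (fun v => (Q:Mat)ᵀ *ᵥ v) h2
        simp only [mulVec_mulVec, ← mul_assoc] at h2' ⊢
        simp only [mul_assoc, hL, hL', horth, horth', mul_one, one_mul, one_mulVec] at h2' ⊢
        exact h2'
      · have h3' := congrArg (fun v => (Q:Mat)ᵀ *ᵥ v) h3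
        simp only [mulVec_mulVec, ← mul_assoc] at h3' ⊢
        simp only [mul_assoc, hL, hL', horth, horth', mul_one, one_mul, one_mulVec] at h3' ⊢
        exact h3'
  exact (MulEquiv.subgroupMap (MulAut.conj Q) (sg A M K)).trans (MulEquiv.subgroupCongr key)

/-! ### Entry helpers -/

lemma col_dot (R : O3) (i j : Fin 3) :
    ∑ k, (R:Mat) k i * (R:Mat) k j = if i = j then 1 else 0 := by
  have := congrFun (congrFun (o3_orth' (R := R)) i) j
  simpa [Matrix.mul_apply, Matrix.one_apply, Matrix.transpose_apply] using this

lemma row_dot (R : O3) (i j : Fin 3) :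
    ∑ k, (R:Mat) i k * (R:Mat) j k = if i = j then 1 else 0 := by
  have := congrFun (congrFun (o3_orth (R := R)) i) j
  simpa [Matrix.mul_apply, Matrix.one_apply, Matrix.transpose_apply] using this

lemma pin_iff (R : Mat) (i : Fin 3) :
    R *ᵥ Pi.single i 1 = Pi.single i 1 ↔ ∀ k, R k i = if k = i then 1 else 0 := by
  rw [mulVec_single]
  constructor
  · intro hfun k
    have := congrFun hfun k
    simpa [Pi.single_apply] using this
  · intro hk
    funext k
    simpa [Pi.single_apply] using hk k

/-- If column `i` of an orthogonal matrix is pinned, then the off-diagonal entries of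
row `i` vanish. -/
lemma pin_row {R : O3} {i : Fin 3} (hp : ∀ k, (R:Mat) k i = if k = i then 1 else 0)
    (j : Fin 3) (hj : j ≠ i) : (R:Mat) i j = 0 := by
  have hc := col_dot R i j
  rw [if_neg (fun hij => hj hij.symm)] at hc
  calc (R:Mat) i j = ∑ k, (if k = i then (1:ℝ) else 0) * (R:Mat) k j := by
        simp
    _ = ∑ k, (R:Mat) k i * (R:Mat) k j := by
        refine Finset.sum_congr rfl fun k _ => ?_
        rw [hp k]
    _ = 0 := hc

/-! ### sign function on ZMod 2 -/

def sg2 : ZMod 2 → ℝ := fun a => if a = 0 then 1 else -1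

lemma zmod2_cases : ∀ a : ZMod 2, a = 0 ∨ a = 1 := by decide

lemma sg2_zero : sg2 0 = 1 := rfl

lemma sg2_add (a b : ZMod 2) : sg2 (a + b) = sg2 a * sg2 b := by
  rcases zmod2_cases a with ha | ha <;> rcases zmod2_cases b with hb | hb <;>
    subst ha <;> subst hb
  · norm_num [sg2]
  · norm_num [sg2]
  · norm_num [sg2]
  · rw [show (1:ZMod 2)+1 = 0 from by decide]
    norm_num [sg2]

lemma sg2_sq (a : ZMod 2) : sg2 a * sg2 a = 1 := by
  rcases zmod2_cases a with ha | ha <;> subst ha <;> norm_num [sg2]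

lemma sg2_inj {a b : ZMod 2} (hab : sg2 a = sg2 b) : a = b := by
  rcases zmod2_cases a with ha | ha <;> rcases zmod2_cases b with hb | hb <;>
    subst ha <;> subst hb <;> first | rfl | (norm_num [sg2] at hab)

/-! ### diagonal sign matrices -/

lemma diag_mem_O3 (v : Fin 3 → ℝ) (hv : ∀ i, v i * v i = 1) :
    (diagonal v : Mat) ∈ Matrix.orthogonalGroup (Fin 3) ℝ := by
  rw [Matrix.mem_orthogonalGroup_iff]
  have hstar : star (diagonal v : Mat) = diagonal v := by
    have : star (diagonal v : Mat) = (diagonal v : Mat)ᵀ := rfl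
    rw [this, diagonal_transpose]
  rw [diagonal_transpose, diagonal_mul_diagonal]
  have : (fun i => v i * v i) = fun _ => (1:ℝ) := funext fun i => hv i
  rw [this, diagonal_one]

/-! ### easy classifications -/

lemma classify_O3 (G : Subgroup O3) (h : ∀ R : O3, R ∈ G) :
    Nonempty (G ≃* Matrix.orthogonalGroup (Fin 3) ℝ) := by
  have hG : G = ⊤ := Subgroup.ext fun R => by simpa using h R
  exact ⟨(MulEquiv.subgroupCongr hG).trans Subgroup.topEquiv⟩

lemma classify_trivial (G : Subgroup O3) (h : ∀ R : O3, R ∈ G ↔ R = 1) :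
    Nonempty (G ≃* PUnit) := by
  refine ⟨{ toFun := fun _ => PUnit.unit, invFun := fun _ => 1,
            left_inv := ?_, right_inv := fun _ => rfl, map_mul' := fun _ _ => rfl }⟩
  rintro ⟨x, hx⟩
  exact Subtype.ext ((h x).mp hx).symm

/-! ### diagonal-sign classification -/

lemma diag_pin (v : Fin 3 → ℝ) (i : Fin 3) (hv : v i = 1) :
    (diagonal v : Mat) *ᵥ Pi.single i 1 = Pi.single i 1 := by
  rw [pin_iff]
  intro k
  by_cases hk : k = i
  · subst hk; simpa [Matrix.diagonal_apply_eq] using hv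
  · simp [Matrix.diagonal_apply_ne _ hk, hk]

lemma entry_sq_one {R : O3} {i : Fin 3} (h : ∀ k, k ≠ i → (R:Mat) k i = 0) :
    (R:Mat) i i = 1 ∨ (R:Mat) i i = -1 := by
  have hc := col_dot R i i
  rw [if_pos rfl] at hc
  have hsum : ∑ k, (R:Mat) k i * (R:Mat) k i = (R:Mat) i i * (R:Mat) i i := by
    rw [Finset.sum_eq_single i]
    · intro k _ hk
      rw [h k hk]; ring
    · intro hi; exact absurd (Finset.mem_univ i) hi
  rw [hsum] at hc
  exact mul_self_eq_one_iff.mp hc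

lemma classify_Z2 (G : Subgroup O3)
    (h : ∀ R : O3, R ∈ G ↔ ((R:Mat) *ᵥ Pi.single 1 1 = Pi.single 1 1 ∧
                            (R:Mat) *ᵥ Pi.single 2 1 = Pi.single 2 1)) :
    Nonempty (G ≃* Multiplicative (ZMod 2)) := by
  have hvsq : ∀ a : ZMod 2, ∀ i, (![sg2 a, 1, 1] : Fin 3 → ℝ) i * ![sg2 a, 1, 1] i = 1 := by
    intro a i; fin_cases i <;> simp [sg2_sq]
  have hmemO : ∀ a : ZMod 2, (diagonal ![sg2 a, 1, 1] : Mat) ∈ Matrix.orthogonalGroup (Fin 3) ℝ :=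
    fun a => diag_mem_O3 _ (hvsq a)
  have hmemG : ∀ a : ZMod 2, (⟨diagonal ![sg2 a, 1, 1], hmemO a⟩ : O3) ∈ G := by
    intro a
    rw [h]
    exact ⟨diag_pin _ 1 rfl, diag_pin _ 2 rfl⟩
  let χ : Multiplicative (ZMod 2) →* G :=
    { toFun := fun a => ⟨⟨diagonal ![sg2 a.toAdd, 1, 1], hmemO _⟩, hmemG _⟩
      map_one' := by
        refine Subtype.ext (Subtype.ext ?_)
        show (diagonal ![sg2 (0 : ZMod 2), 1, 1] : Mat) = 1
        rw [show ![sg2 (0:ZMod 2), 1, 1] = (fun _ => (1:ℝ)) from funext fun i => by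
          fin_cases i <;> simp [sg2_zero]]
        exact diagonal_one
      map_mul' := by
        intro a b
        refine Subtype.ext (Subtype.ext ?_)
        show (diagonal ![sg2 (a.toAdd + b.toAdd), 1, 1] : Mat) =
          diagonal ![sg2 a.toAdd, 1, 1] * diagonal ![sg2 b.toAdd, 1, 1]
        rw [diagonal_mul_diagonal,
          show (fun i => (![sg2 a.toAdd, 1, 1] : Fin 3 → ℝ) i * ![sg2 b.toAdd, 1, 1] i)
            = ![sg2 (a.toAdd + b.toAdd), 1, 1] from funext fun i => by
              fin_cases i <;> simp [sg2_add]] }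
  refine ⟨(MulEquiv.ofBijective χ ⟨?_, ?_⟩).symm⟩
  · intro a b hab
    have h00 := congrFun (congrFun (congrArg (fun g : G => ((g : O3) : Mat)) hab) 0) 0
    simp only [χ, Matrix.diagonal_apply_eq] at h00
    have := sg2_inj (a := a.toAdd) (b := b.toAdd) (by simpa using h00)
    exact Multiplicative.toAdd.injective this
  · rintro ⟨R, hR⟩
    obtain ⟨hf1, hf2⟩ := (h R).mp hR
    have hp1 := (pin_iff _ 1).mp hf1
    have hp2 := (pin_iff _ 2).mp hf2
    have hz : ∀ k, k ≠ 0 → (R:Mat) k 0 = 0 := by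
      intro k hk
      fin_cases k
      · exact absurd rfl hk
      · exact pin_row hp1 0 (by decide)
      · exact pin_row hp2 0 (by decide)
    have h00 := entry_sq_one (i := 0) hz
    set a : ZMod 2 := if (R:Mat) 0 0 = 1 then 0 else 1 with ha
    refine ⟨Multiplicative.ofAdd a, ?_⟩
    refine Subtype.ext (Subtype.ext ?_)
    show (diagonal ![sg2 a, 1, 1] : Mat) = (R : Mat)
    have hsgn : sg2 a = (R:Mat) 0 0 := by
      rcases h00 with h1 | h1
      · rw [ha, if_pos h1, sg2_zero, h1]
      · rw [ha, if_neg (by rw [h1]; norm_num), h1]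
        norm_num [sg2]
    have e01 : (R:Mat) 0 1 = 0 := by simpa using hp1 0
    have e11 : (R:Mat) 1 1 = 1 := by simpa using hp1 1
    have e21 : (R:Mat) 2 1 = 0 := by simpa using hp1 2
    have e02 : (R:Mat) 0 2 = 0 := by simpa using hp2 0
    have e12 : (R:Mat) 1 2 = 0 := by simpa using hp2 1
    have e22 : (R:Mat) 2 2 = 1 := by simpa using hp2 2
    have e10 : (R:Mat) 1 0 = 0 := pin_row hp1 0 (by decide)
    have e20 : (R:Mat) 2 0 = 0 := pin_row hp2 0 (by decide)
    ext i j
    fin_cases i <;> fin_cases j <;>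
      simp [Matrix.diagonal_apply, e01, e02, e10, e11, e12, e20, e21, e22, hsgn]

lemma classify_Z2Z2 (G : Subgroup O3)
    (h : ∀ R : O3, R ∈ G ↔ ((R:Mat) *ᵥ Pi.single 2 1 = Pi.single 2 1 ∧
                            (R:Mat) 0 1 = 0 ∧ (R:Mat) 1 0 = 0)) :
    Nonempty (G ≃* (Multiplicative (ZMod 2) × Multiplicative (ZMod 2))) := by
  have hvsq : ∀ a b : ZMod 2, ∀ i, (![sg2 a, sg2 b, 1] : Fin 3 → ℝ) i * ![sg2 a, sg2 b, 1] i = 1 := by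
    intro a b i; fin_cases i <;> simp [sg2_sq]
  have hmemO : ∀ a b : ZMod 2, (diagonal ![sg2 a, sg2 b, 1] : Mat) ∈ Matrix.orthogonalGroup (Fin 3) ℝ :=
    fun a b => diag_mem_O3 _ (hvsq a b)
  have hmemG : ∀ a b : ZMod 2, (⟨diagonal ![sg2 a, sg2 b, 1], hmemO a b⟩ : O3) ∈ G := by
    intro a b
    rw [h]
    exact ⟨diag_pin _ 2 rfl, Matrix.diagonal_apply_ne _ (by decide), Matrix.diagonal_apply_ne _ (by decide)⟩
  let χ : Multiplicative (ZMod 2) × Multiplicative (ZMod 2) →* G :=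
    { toFun := fun p => ⟨⟨diagonal ![sg2 p.1.toAdd, sg2 p.2.toAdd, 1], hmemO _ _⟩, hmemG _ _⟩
      map_one' := by
        refine Subtype.ext (Subtype.ext ?_)
        show (diagonal ![sg2 (0 : ZMod 2), sg2 (0 : ZMod 2), 1] : Mat) = 1
        rw [show ![sg2 (0:ZMod 2), sg2 (0:ZMod 2), 1] = (fun _ => (1:ℝ)) from funext fun i => by
          fin_cases i <;> simp [sg2_zero]]
        exact diagonal_one
      map_mul' := by
        intro p q
        refine Subtype.ext (Subtype.ext ?_)
        show (diagonal ![sg2 (p.1.toAdd + q.1.toAdd), sg2 (p.2.toAdd + q.2.toAdd), 1] : Mat) =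
          diagonal ![sg2 p.1.toAdd, sg2 p.2.toAdd, 1] * diagonal ![sg2 q.1.toAdd, sg2 q.2.toAdd, 1]
        rw [diagonal_mul_diagonal,
          show (fun i => (![sg2 p.1.toAdd, sg2 p.2.toAdd, 1] : Fin 3 → ℝ) i
              * ![sg2 q.1.toAdd, sg2 q.2.toAdd, 1] i)
            = ![sg2 (p.1.toAdd + q.1.toAdd), sg2 (p.2.toAdd + q.2.toAdd), 1] from
            funext fun i => by fin_cases i <;> simp [sg2_add]] }
  refine ⟨(MulEquiv.ofBijective χ ⟨?_, ?_⟩).symm⟩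
  · intro p q hpq
    have hmm := congrArg (fun g : G => ((g : O3) : Mat)) hpq
    have h00 := congrFun (congrFun hmm 0) 0
    have h11 := congrFun (congrFun hmm 1) 1
    simp only [χ, Matrix.diagonal_apply_eq] at h00 h11
    have h1 := sg2_inj (a := p.1.toAdd) (b := q.1.toAdd) (by simpa using h00)
    have h2 := sg2_inj (a := p.2.toAdd) (b := q.2.toAdd) (by simpa using h11)
    exact Prod.ext (Multiplicative.toAdd.injective h1) (Multiplicative.toAdd.injective h2)
  · rintro ⟨R, hR⟩
    obtain ⟨hf2, hz01, hz10⟩ := (h R).mp hR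
    have hp2 := (pin_iff _ 2).mp hf2
    have e02 : (R:Mat) 0 2 = 0 := by simpa using hp2 0
    have e12 : (R:Mat) 1 2 = 0 := by simpa using hp2 1
    have e22 : (R:Mat) 2 2 = 1 := by simpa using hp2 2
    have e20 : (R:Mat) 2 0 = 0 := pin_row hp2 0 (by decide)
    have e21 : (R:Mat) 2 1 = 0 := pin_row hp2 1 (by decide)
    have h00 := entry_sq_one (i := 0) (by
      intro k hk; fin_cases k
      · exact absurd rfl hk
      · exact hz10
      · exact e20)
    have h11 := entry_sq_one (i := 1) (by
      intro k hk; fin_cases k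
      · exact hz01
      · exact absurd rfl hk
      · exact e21)
    set a : ZMod 2 := if (R:Mat) 0 0 = 1 then 0 else 1 with ha
    set b : ZMod 2 := if (R:Mat) 1 1 = 1 then 0 else 1 with hb
    have hsa : sg2 a = (R:Mat) 0 0 := by
      rcases h00 with h1 | h1
      · rw [ha, if_pos h1, sg2_zero, h1]
      · rw [ha, if_neg (by rw [h1]; norm_num), h1]
        norm_num [sg2]
    have hsb : sg2 b = (R:Mat) 1 1 := by
      rcases h11 with h1 | h1
      · rw [hb, if_pos h1, sg2_zero, h1]
      · rw [hb, if_neg (by rw [h1]; norm_num), h1]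
        norm_num [sg2]
    refine ⟨(Multiplicative.ofAdd a, Multiplicative.ofAdd b), ?_⟩
    refine Subtype.ext (Subtype.ext ?_)
    show (diagonal ![sg2 a, sg2 b, 1] : Mat) = (R : Mat)
    ext i j
    fin_cases i <;> fin_cases j <;>
      simp [Matrix.diagonal_apply, e02, e12, e20, e21, e22, hz01, hz10, hsa, hsb]

lemma classify_Z2Z2Z2 (G : Subgroup O3)
    (h : ∀ R : O3, R ∈ G ↔ (∀ i j, i ≠ j → (R:Mat) i j = 0)) :
    Nonempty (G ≃* (Multiplicative (ZMod 2) × Multiplicative (ZMod 2) × Multiplicative (ZMod 2))) := by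
  have hvsq : ∀ a b c : ZMod 2, ∀ i,
      (![sg2 a, sg2 b, sg2 c] : Fin 3 → ℝ) i * ![sg2 a, sg2 b, sg2 c] i = 1 := by
    intro a b c i; fin_cases i <;> simp [sg2_sq]
  have hmemO : ∀ a b c : ZMod 2,
      (diagonal ![sg2 a, sg2 b, sg2 c] : Mat) ∈ Matrix.orthogonalGroup (Fin 3) ℝ :=
    fun a b c => diag_mem_O3 _ (hvsq a b c)
  have hmemG : ∀ a b c : ZMod 2, (⟨diagonal ![sg2 a, sg2 b, sg2 c], hmemO a b c⟩ : O3) ∈ G := by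
    intro a b c
    rw [h]
    intro i j hij
    exact Matrix.diagonal_apply_ne _ hij
  let χ : Multiplicative (ZMod 2) × Multiplicative (ZMod 2) × Multiplicative (ZMod 2) →* G :=
    { toFun := fun p => ⟨⟨diagonal ![sg2 p.1.toAdd, sg2 p.2.1.toAdd, sg2 p.2.2.toAdd],
        hmemO _ _ _⟩, hmemG _ _ _⟩
      map_one' := by
        refine Subtype.ext (Subtype.ext ?_)
        show (diagonal ![sg2 (0 : ZMod 2), sg2 (0 : ZMod 2), sg2 (0 : ZMod 2)] : Mat) = 1
        rw [show ![sg2 (0:ZMod 2), sg2 (0:ZMod 2), sg2 (0:ZMod 2)] = (fun _ => (1:ℝ)) from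
          funext fun i => by fin_cases i <;> simp [sg2_zero]]
        exact diagonal_one
      map_mul' := by
        intro p q
        refine Subtype.ext (Subtype.ext ?_)
        show (diagonal ![sg2 (p.1.toAdd + q.1.toAdd), sg2 (p.2.1.toAdd + q.2.1.toAdd),
            sg2 (p.2.2.toAdd + q.2.2.toAdd)] : Mat) = _
        rw [show ((⟨⟨_, hmemO p.1.toAdd p.2.1.toAdd p.2.2.toAdd⟩, hmemG _ _ _⟩ : G) *
          (⟨⟨_, hmemO q.1.toAdd q.2.1.toAdd q.2.2.toAdd⟩, hmemG _ _ _⟩ : G) : G).1.1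
          = diagonal ![sg2 p.1.toAdd, sg2 p.2.1.toAdd, sg2 p.2.2.toAdd]
            * diagonal ![sg2 q.1.toAdd, sg2 q.2.1.toAdd, sg2 q.2.2.toAdd] from rfl,
          diagonal_mul_diagonal,
          show (fun i => (![sg2 p.1.toAdd, sg2 p.2.1.toAdd, sg2 p.2.2.toAdd] : Fin 3 → ℝ) i
              * ![sg2 q.1.toAdd, sg2 q.2.1.toAdd, sg2 q.2.2.toAdd] i)
            = ![sg2 (p.1.toAdd + q.1.toAdd), sg2 (p.2.1.toAdd + q.2.1.toAdd),
                sg2 (p.2.2.toAdd + q.2.2.toAdd)] from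
            funext fun i => by fin_cases i <;> simp [sg2_add]] }
  refine ⟨(MulEquiv.ofBijective χ ⟨?_, ?_⟩).symm⟩
  · intro p q hpq
    have hmm := congrArg (fun g : G => ((g : O3) : Mat)) hpq
    have h00 := congrFun (congrFun hmm 0) 0
    have h11 := congrFun (congrFun hmm 1) 1
    have h22 := congrFun (congrFun hmm 2) 2
    simp only [χ, Matrix.diagonal_apply_eq] at h00 h11 h22
    have h1 := sg2_inj (a := p.1.toAdd) (b := q.1.toAdd) (by simpa using h00)
    have h2 := sg2_inj (a := p.2.1.toAdd) (b := q.2.1.toAdd) (by simpa using h11)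
    have h3 := sg2_inj (a := p.2.2.toAdd) (b := q.2.2.toAdd) (by simpa using h22)
    exact Prod.ext (Multiplicative.toAdd.injective h1)
      (Prod.ext (Multiplicative.toAdd.injective h2) (Multiplicative.toAdd.injective h3))
  · rintro ⟨R, hR⟩
    have hz := (h R).mp hR
    have h00 := entry_sq_one (i := 0) (fun k hk => hz k 0 hk)
    have h11 := entry_sq_one (i := 1) (fun k hk => hz k 1 hk)
    have h22 := entry_sq_one (i := 2) (fun k hk => hz k 2 hk)
    set a : ZMod 2 := if (R:Mat) 0 0 = 1 then 0 else 1 with ha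
    set b : ZMod 2 := if (R:Mat) 1 1 = 1 then 0 else 1 with hb
    set c : ZMod 2 := if (R:Mat) 2 2 = 1 then 0 else 1 with hc
    have hsa : sg2 a = (R:Mat) 0 0 := by
      rcases h00 with h1 | h1
      · rw [ha, if_pos h1, sg2_zero, h1]
      · rw [ha, if_neg (by rw [h1]; norm_num), h1]; norm_num [sg2]
    have hsb : sg2 b = (R:Mat) 1 1 := by
      rcases h11 with h1 | h1
      · rw [hb, if_pos h1, sg2_zero, h1]
      · rw [hb, if_neg (by rw [h1]; norm_num), h1]; norm_num [sg2]
    have hsc : sg2 c = (R:Mat) 2 2 := by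
      rcases h22 with h1 | h1
      · rw [hc, if_pos h1, sg2_zero, h1]
      · rw [hc, if_neg (by rw [h1]; norm_num), h1]; norm_num [sg2]
    refine ⟨(Multiplicative.ofAdd a, Multiplicative.ofAdd b, Multiplicative.ofAdd c), ?_⟩
    refine Subtype.ext (Subtype.ext ?_)
    show (diagonal ![sg2 a, sg2 b, sg2 c] : Mat) = (R : Mat)
    ext i j
    fin_cases i <;> fin_cases j <;>
      first
        | (rw [Matrix.diagonal_apply_ne _ (by decide)]; exact (hz _ _ (by decide)).symm)
        | (simp [Matrix.diagonal_apply, hsa, hsb, hsc])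

/-! ### O(2) block embedding -/

local notation "Mat2" => Matrix (Fin 2) (Fin 2) ℝ
local notation "O2" => Matrix.orthogonalGroup (Fin 2) ℝ

lemma o2_orth {S : O2} : (S : Mat2) * (S : Mat2)ᵀ = 1 := by
  have := S.2
  rw [Matrix.mem_orthogonalGroup_iff] at this
  exact this

def EMB (S : Mat2) (t : ℝ) : Mat :=
  Matrix.of ![![S 0 0, S 0 1, 0], ![S 1 0, S 1 1, 0], ![0, 0, t]]

lemma EMB_mul (S T : Mat2) (t u : ℝ) : EMB S t * EMB T u = EMB (S * T) (t * u) := by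
  ext i j
  fin_cases i <;> fin_cases j <;>
    simp [EMB, Matrix.mul_apply, Fin.sum_univ_three, Fin.sum_univ_two]

lemma EMB_transpose (S : Mat2) (t : ℝ) : (EMB S t)ᵀ = EMB Sᵀ t := by
  ext i j
  fin_cases i <;> fin_cases j <;> simp [EMB, Matrix.transpose_apply, Matrix.vecHead, Matrix.vecTail]

lemma EMB_one : EMB 1 1 = (1 : Mat) := by
  ext i j
  fin_cases i <;> fin_cases j <;> simp [EMB, Matrix.one_apply, Matrix.vecHead, Matrix.vecTail]

lemma EMB_memO3 (S : O2) (t : ℝ) (ht : t * t = 1) :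
    EMB (S : Mat2) t ∈ Matrix.orthogonalGroup (Fin 3) ℝ := by
  rw [Matrix.mem_orthogonalGroup_iff]
  have hstar : star (EMB (S : Mat2) t) = (EMB (S : Mat2) t)ᵀ := rfl
  rw [EMB_transpose, EMB_mul, o2_orth, ht, EMB_one]

lemma EMB_pin2 (S : Mat2) : EMB S 1 *ᵥ Pi.single 2 1 = Pi.single 2 1 := by
  rw [pin_iff]
  intro k
  fin_cases k <;> simp [EMB]

/-- Extract the 2×2 block of `R ∈ O3` whose column 2 entries vanish off the corner. -/
lemma block_orth (R : O3) (e02 : (R:Mat) 0 2 = 0) (e12 : (R:Mat) 1 2 = 0) :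
    (Matrix.of ![![(R:Mat) 0 0, (R:Mat) 0 1], ![(R:Mat) 1 0, (R:Mat) 1 1]] : Mat2)
      ∈ Matrix.orthogonalGroup (Fin 2) ℝ := by
  rw [Matrix.mem_orthogonalGroup_iff]
  have hstar : ∀ X : Mat2, star X = Xᵀ := fun _ => rfl
  have hd0 := row_dot R 0 0
  have hd1 := row_dot R 0 1
  have hd2 := row_dot R 1 0
  have hd3 := row_dot R 1 1
  rw [Fin.sum_univ_three] at hd0 hd1 hd2 hd3
  rw [e02] at hd0 hd1
  rw [e12] at hd2 hd3
  norm_num at hd0 hd1 hd2 hd3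
  ext i j
  fin_cases i <;> fin_cases j <;>
    simp [Matrix.mul_apply, Fin.sum_univ_two, Matrix.one_apply, Matrix.transpose_apply,
      Matrix.vecHead, Matrix.vecTail] <;>
    linarith [hd0, hd1, hd2, hd3]

lemma classify_O2 (G : Subgroup O3)
    (h : ∀ R : O3, R ∈ G ↔ (R:Mat) *ᵥ Pi.single 2 1 = Pi.single 2 1) :
    Nonempty (G ≃* Matrix.orthogonalGroup (Fin 2) ℝ) := by
  have hmemG : ∀ S : O2, (⟨EMB (S:Mat2) 1, EMB_memO3 S 1 (by norm_num)⟩ : O3) ∈ G := by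
    intro S
    rw [h]
    exact EMB_pin2 _
  let χ : O2 →* G :=
    { toFun := fun S => ⟨⟨EMB (S:Mat2) 1, EMB_memO3 S 1 (by norm_num)⟩, hmemG S⟩
      map_one' := by
        refine Subtype.ext (Subtype.ext ?_)
        show EMB ((1 : O2) : Mat2) 1 = (1 : Mat)
        rw [show ((1 : O2) : Mat2) = (1 : Mat2) from rfl, EMB_one]
      map_mul' := by
        intro S T
        refine Subtype.ext (Subtype.ext ?_)
        show EMB ((S*T : O2) : Mat2) 1 = EMB (S:Mat2) 1 * EMB (T:Mat2) 1
        rw [EMB_mul, mul_one]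
        rfl }
  refine ⟨(MulEquiv.ofBijective χ ⟨?_, ?_⟩).symm⟩
  · intro S T hST
    have hmm := congrArg (fun g : G => ((g : O3) : Mat)) hST
    refine Subtype.ext ?_
    ext i j
    fin_cases i <;> fin_cases j
    · simpa [χ, EMB] using congrFun (congrFun hmm 0) 0
    · simpa [χ, EMB] using congrFun (congrFun hmm 0) 1
    · simpa [χ, EMB] using congrFun (congrFun hmm 1) 0
    · simpa [χ, EMB] using congrFun (congrFun hmm 1) 1
  · rintro ⟨R, hR⟩
    have hp := (pin_iff _ 2).mp ((h R).mp hR)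
    have e02 : (R:Mat) 0 2 = 0 := by simpa using hp 0
    have e12 : (R:Mat) 1 2 = 0 := by simpa using hp 1
    have e22 : (R:Mat) 2 2 = 1 := by simpa using hp 2
    have e20 : (R:Mat) 2 0 = 0 := pin_row hp 0 (by decide)
    have e21 : (R:Mat) 2 1 = 0 := pin_row hp 1 (by decide)
    refine ⟨⟨_, block_orth R e02 e12⟩, ?_⟩
    refine Subtype.ext (Subtype.ext ?_)
    show EMB _ 1 = (R : Mat)
    ext i j
    fin_cases i <;> fin_cases j <;>
      simp [EMB, e02, e12, e20, e21, e22]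

lemma classify_O2Z2 (G : Subgroup O3)
    (h : ∀ R : O3, R ∈ G ↔ ((R:Mat) 0 2 = 0 ∧ (R:Mat) 1 2 = 0 ∧
                            (R:Mat) 2 0 = 0 ∧ (R:Mat) 2 1 = 0)) :
    Nonempty (G ≃* (Matrix.orthogonalGroup (Fin 2) ℝ × Multiplicative (ZMod 2))) := by
  have hmemG : ∀ (S : O2) (a : ZMod 2),
      (⟨EMB (S:Mat2) (sg2 a), EMB_memO3 S _ (sg2_sq a)⟩ : O3) ∈ G := by
    intro S a
    rw [h]
    refine ⟨rfl, rfl, rfl, rfl⟩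
  let χ : O2 × Multiplicative (ZMod 2) →* G :=
    { toFun := fun p => ⟨⟨EMB (p.1:Mat2) (sg2 p.2.toAdd), EMB_memO3 p.1 _ (sg2_sq _)⟩,
        hmemG p.1 p.2.toAdd⟩
      map_one' := by
        refine Subtype.ext (Subtype.ext ?_)
        show EMB ((1 : O2) : Mat2) (sg2 0) = (1 : Mat)
        rw [show ((1 : O2) : Mat2) = (1 : Mat2) from rfl, sg2_zero, EMB_one]
      map_mul' := by
        intro p q
        refine Subtype.ext (Subtype.ext ?_)
        show EMB ((p.1 * q.1 : O2) : Mat2) (sg2 (p.2.toAdd + q.2.toAdd))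
          = EMB (p.1:Mat2) (sg2 p.2.toAdd) * EMB (q.1:Mat2) (sg2 q.2.toAdd)
        rw [EMB_mul, sg2_add]
        rfl }
  refine ⟨(MulEquiv.ofBijective χ ⟨?_, ?_⟩).symm⟩
  · intro p q hpq
    have hmm := congrArg (fun g : G => ((g : O3) : Mat)) hpq
    refine Prod.ext (Subtype.ext ?_) ?_
    · ext i j
      fin_cases i <;> fin_cases j
      · simpa [χ, EMB] using congrFun (congrFun hmm 0) 0
      · simpa [χ, EMB] using congrFun (congrFun hmm 0) 1
      · simpa [χ, EMB] using congrFun (congrFun hmm 1) 0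
      · simpa [χ, EMB] using congrFun (congrFun hmm 1) 1
    · have h22 : sg2 p.2.toAdd = sg2 q.2.toAdd := by
        simpa [χ, EMB] using congrFun (congrFun hmm 2) 2
      exact Multiplicative.toAdd.injective (sg2_inj h22)
  · rintro ⟨R, hR⟩
    obtain ⟨e02, e12, e20, e21⟩ := (h R).mp hR
    have h22 := entry_sq_one (i := 2) (by
      intro k hk
      fin_cases k
      · exact e02
      · exact e12
      · exact absurd rfl hk)
    set a : ZMod 2 := if (R:Mat) 2 2 = 1 then 0 else 1 with ha
    have hsa : sg2 a = (R:Mat) 2 2 := by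
      rcases h22 with h1 | h1
      · rw [ha, if_pos h1, sg2_zero, h1]
      · rw [ha, if_neg (by rw [h1]; norm_num), h1]; norm_num [sg2]
    refine ⟨(⟨_, block_orth R e02 e12⟩, Multiplicative.ofAdd a), ?_⟩
    refine Subtype.ext (Subtype.ext ?_)
    show EMB _ (sg2 a) = (R : Mat)
    ext i j
    fin_cases i <;> fin_cases j <;>
      simp [EMB, e02, e12, e20, e21, hsa]

/-! ### permutation matrices -/

lemma Equiv.Perm.inv_apply_self {α : Type*} (σ : Equiv.Perm α) (x : α) : σ⁻¹ (σ x) = x :=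
  Equiv.Perm.inv_eq_iff_eq.mpr rfl

lemma Equiv.Perm.apply_inv_self {α : Type*} (σ : Equiv.Perm α) (x : α) : σ (σ⁻¹ x) = x :=
  (Equiv.eq_symm_apply σ).mp rfl

def pm (σ : Equiv.Perm (Fin 3)) : Mat := Matrix.of fun i j => if σ j = i then 1 else 0

lemma pm_transpose (σ : Equiv.Perm (Fin 3)) : (pm σ)ᵀ = pm σ⁻¹ := by
  ext i j
  simp only [Matrix.transpose_apply, pm, Matrix.of_apply]
  by_cases h : σ i = j
  · rw [if_pos h, if_pos (by rw [← h, Equiv.Perm.inv_apply_self])]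
  · rw [if_neg h, if_neg (fun hc => h (by rw [← hc, Equiv.Perm.apply_inv_self]))]

lemma pm_transpose_mul (σ : Equiv.Perm (Fin 3)) : (pm σ)ᵀ * pm σ = 1 := by
  ext i j
  simp only [Matrix.mul_apply, Matrix.transpose_apply, pm, Matrix.of_apply]
  rw [Finset.sum_eq_single (σ i)]
  · by_cases hij : i = j
    · subst hij; simp
    · rw [if_pos rfl, if_neg (fun hc => hij (σ.injective hc).symm)]
      simp [Matrix.one_apply, hij]
  · intro k _ hk
    rw [if_neg (fun hc => hk hc.symm)]
    ring
  · intro hk; exact absurd (Finset.mem_univ _) hk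

lemma pm_mul_transpose (σ : Equiv.Perm (Fin 3)) : pm σ * (pm σ)ᵀ = 1 := by
  rw [pm_transpose, show pm σ = (pm σ⁻¹)ᵀ by rw [pm_transpose, inv_inv]]
  exact pm_transpose_mul σ⁻¹

def pmO3 (σ : Equiv.Perm (Fin 3)) : O3 :=
  ⟨pm σ, by
    rw [Matrix.mem_orthogonalGroup_iff']
    exact pm_transpose_mul σ⟩

lemma pmO3_coe (σ : Equiv.Perm (Fin 3)) : ((pmO3 σ : O3) : Mat) = pm σ := rfl

lemma pm_conj_entry (σ : Equiv.Perm (Fin 3)) (X : Mat) (i j : Fin 3) :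
    ((pm σ)ᵀ * X * pm σ) i j = X (σ i) (σ j) := by
  simp only [Matrix.mul_apply, Matrix.transpose_apply, pm, Matrix.of_apply]
  rw [Finset.sum_eq_single (σ j)]
  · rw [if_pos rfl, mul_one, Finset.sum_eq_single (σ i)]
    · rw [if_pos rfl, one_mul]
    · intro k _ hk
      rw [if_neg (fun hc => hk hc.symm), zero_mul]
    · intro hk; exact absurd (Finset.mem_univ _) hk
  · intro k _ hk
    rw [if_neg (fun hc => hk hc.symm), mul_zero]
  · intro hk; exact absurd (Finset.mem_univ _) hk

lemma pm_conj_pin (σ : Equiv.Perm (Fin 3)) (X : Mat) (i : Fin 3) :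
    ((pm σ)ᵀ * X * pm σ) *ᵥ Pi.single i 1 = Pi.single i 1 ↔
      X *ᵥ Pi.single (σ i) 1 = Pi.single (σ i) 1 := by
  rw [pin_iff, pin_iff]
  constructor
  · intro h k
    have h2 := h (σ⁻¹ k)
    rw [pm_conj_entry, Equiv.Perm.apply_inv_self] at h2
    rw [h2]
    by_cases hk : k = σ i
    · rw [if_pos hk, if_pos (by rw [hk, Equiv.Perm.inv_apply_self])]
    · rw [if_neg hk, if_neg (fun hc => hk (by rw [← Equiv.Perm.apply_inv_self σ k, hc]))]
  · intro h k
    rw [pm_conj_entry, h (σ k)]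
    by_cases hk : k = i
    · rw [if_pos hk, if_pos (by rw [hk])]
    · rw [if_neg hk, if_neg (fun hc => hk (σ.injective hc))]

lemma pm_mulVec (σ : Equiv.Perm (Fin 3)) (v : Fin 3 → ℝ) :
    pm σ *ᵥ v = fun i => v (σ⁻¹ i) := by
  funext i
  show ∑ j, (if σ j = i then (1:ℝ) else 0) * v j = v (σ⁻¹ i)
  rw [Finset.sum_eq_single (σ⁻¹ i)]
  · rw [if_pos (Equiv.Perm.apply_inv_self σ i), one_mul]
  · intro k _ hk
    rw [if_neg (fun hc => hk (by rw [← hc, Equiv.Perm.inv_apply_self])), zero_mul]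
  · intro hk; exact absurd (Finset.mem_univ _) hk

lemma pm_conj_diag (σ : Equiv.Perm (Fin 3)) (d : Fin 3 → ℝ) :
    pm σ * diagonal d * (pm σ)ᵀ = diagonal (fun i => d (σ⁻¹ i)) := by
  have h1 : pm σ = (pm σ⁻¹)ᵀ := by rw [pm_transpose, inv_inv]
  have h2 : (pm σ)ᵀ = pm σ⁻¹ := pm_transpose σ
  rw [h2, h1]
  ext i j
  rw [pm_conj_entry]
  by_cases hij : i = j
  · subst hij; simp [Matrix.diagonal_apply_eq]
  · rw [Matrix.diagonal_apply_ne _ (fun hc => hij ((σ⁻¹).injective hc)),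
      Matrix.diagonal_apply_ne _ hij]

/-! ### the disjunction -/

def Disj (H : Subgroup O3) : Prop :=
    Nonempty (H ≃* PUnit.{1}) ∨
    Nonempty (H ≃* Multiplicative (ZMod 2)) ∨
    Nonempty (H ≃* (Multiplicative (ZMod 2) × Multiplicative (ZMod 2))) ∨
    Nonempty (H ≃* (Multiplicative (ZMod 2) × Multiplicative (ZMod 2) × Multiplicative (ZMod 2))) ∨
    Nonempty (H ≃* Matrix.orthogonalGroup (Fin 2) ℝ) ∨
    Nonempty (H ≃* (Matrix.orthogonalGroup (Fin 2) ℝ × Multiplicative (ZMod 2))) ∨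
    Nonempty (H ≃* Matrix.orthogonalGroup (Fin 3) ℝ)

lemma disj_of_equiv {H H' : Subgroup O3} (e : H ≃* H') (h : Disj H') : Disj H := by
  rcases h with ⟨⟨f⟩⟩ | ⟨⟨f⟩⟩ | ⟨⟨f⟩⟩ | ⟨⟨f⟩⟩ | ⟨⟨f⟩⟩ | ⟨⟨f⟩⟩ | ⟨⟨f⟩⟩
  · exact Or.inl ⟨e.trans f⟩
  · exact Or.inr (Or.inl ⟨e.trans f⟩)
  · exact Or.inr (Or.inr (Or.inl ⟨e.trans f⟩))
  · exact Or.inr (Or.inr (Or.inr (Or.inl ⟨e.trans f⟩)))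
  · exact Or.inr (Or.inr (Or.inr (Or.inr (Or.inl ⟨e.trans f⟩))))
  · exact Or.inr (Or.inr (Or.inr (Or.inr (Or.inr (Or.inl ⟨e.trans f⟩)))))
  · exact Or.inr (Or.inr (Or.inr (Or.inr (Or.inr (Or.inr ⟨e.trans f⟩)))))

lemma disj_map_conj (G : Subgroup O3) (Q : O3)
    (h : Disj (Subgroup.map (MulAut.conj Q).toMonoidHom G)) : Disj G :=
  disj_of_equiv (MulEquiv.subgroupMap (MulAut.conj Q) G) h

lemma mem_map_conj (G : Subgroup O3) (Q R : O3) :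
    R ∈ Subgroup.map (MulAut.conj Q).toMonoidHom G ↔ Q⁻¹ * R * Q ∈ G := by
  rw [Subgroup.mem_map_equiv]
  have : (MulAut.conj Q).symm R = Q⁻¹ * R * Q := by
    simp [MulAut.conj_symm_apply]
  rw [this]

lemma conj_pm_coe (σ : Equiv.Perm (Fin 3)) (R : O3) :
    (((pmO3 σ)⁻¹ * R * pmO3 σ : O3) : Mat) = (pm σ)ᵀ * (R : Mat) * pm σ := rfl

/-! ### commuting with a diagonal matrix -/

lemma comm_iff {R : O3} {D : Mat} :
    (R:Mat) * D * (R:Mat)ᵀ = D ↔ (R:Mat) * D = D * (R:Mat) := by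
  constructor
  · intro h
    conv_rhs => rw [← h]
    rw [mul_assoc, mul_assoc, o3_orth', mul_one]
  · intro h
    rw [h, mul_assoc, o3_orth, mul_one]

lemma comm_entry {R : O3} {d : Fin 3 → ℝ}
    (h : (R:Mat) * diagonal d = diagonal d * (R:Mat)) {i j : Fin 3} (hij : d i ≠ d j) :
    (R:Mat) i j = 0 := by
  have h1 := congrFun (congrFun h i) j
  rw [Matrix.mul_diagonal, Matrix.diagonal_mul] at h1
  by_contra hR
  have h2 : (R:Mat) i j * d j = (R:Mat) i j * d i := by linarith
  exact hij (mul_left_cancel₀ hR h2).symm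

lemma mulVec_offdiag {X : Mat} {M : Fin 3 → ℝ} {i : Fin 3} (h : ∀ j, j ≠ i → X i j = 0) :
    (X *ᵥ M) i = X i i * M i := by
  show ∑ j, X i j * M j = _
  rw [Finset.sum_eq_single i]
  · intro k _ hk; rw [h k hk, zero_mul]
  · intro hk; exact absurd (Finset.mem_univ _) hk

lemma all_pins_one {R : O3} (h : ∀ j, (R:Mat) *ᵥ Pi.single j 1 = Pi.single j 1) : R = 1 := by
  refine Subtype.ext ?_
  ext i j
  rw [(pin_iff _ j).mp (h j) i]
  simp [Matrix.one_apply]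

lemma pin_entries {R : O3} {i : Fin 3} (h : (R:Mat) *ᵥ Pi.single i 1 = Pi.single i 1) :
    (∀ k, k ≠ i → (R:Mat) k i = 0) ∧ ((R:Mat) i i = 1) ∧ (∀ j, j ≠ i → (R:Mat) i j = 0) := by
  have hp := (pin_iff _ i).mp h
  exact ⟨fun k hk => by rw [hp k, if_neg hk], by rw [hp i, if_pos rfl],
    fun j hj => pin_row hp j hj⟩

lemma case_distinct (d M K : Fin 3 → ℝ)
    (h01 : d 0 ≠ d 1) (h02 : d 0 ≠ d 2) (h12 : d 1 ≠ d 2) :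
    Disj (sg (diagonal d) M K) := by
  set G := sg (diagonal d) M K with hG
  have dne : ∀ i j : Fin 3, i ≠ j → d i ≠ d j := by
    intro i j hij
    fin_cases i <;> fin_cases j <;>
      first
        | exact absurd rfl hij
        | exact h01 | exact h02 | exact h12
        | exact h01.symm | exact h02.symm | exact h12.symm
  have hchar : ∀ R : O3, R ∈ G ↔
      ((∀ i j, i ≠ j → (R:Mat) i j = 0) ∧
       ∀ i, ¬(M i = 0 ∧ K i = 0) → (R:Mat) *ᵥ Pi.single i 1 = Pi.single i 1) := by
    intro R
    constructor
    · rintro ⟨hcm, hM, hK⟩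
      have hcomm := comm_iff.mp hcm
      have hz : ∀ i j, i ≠ j → (R:Mat) i j = 0 := fun i j hij => comm_entry hcomm (dne i j hij)
      refine ⟨hz, ?_⟩
      intro i hi
      rw [pin_iff]
      have hRii : (R:Mat) i i = 1 := by
        rcases not_and_or.mp hi with hMi | hKi
        · have h1 : (R:Mat) i i * M i = M i := by
            rw [← mulVec_offdiag (fun j hj => hz i j (Ne.symm hj)), hM]
          exact mul_right_cancel₀ hMi (by rw [h1, one_mul])
        · have h1 : (R:Mat) i i * K i = K i := by
            rw [← mulVec_offdiag (fun j hj => hz i j (Ne.symm hj)), hK]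
          exact mul_right_cancel₀ hKi (by rw [h1, one_mul])
      intro k
      by_cases hk : k = i
      · subst hk; rw [hRii, if_pos rfl]
      · rw [hz k i hk, if_neg hk]
    · rintro ⟨hz, hpin⟩
      refine ⟨comm_iff.mpr ?_, ?_, ?_⟩
      · ext i j
        rw [Matrix.mul_diagonal, Matrix.diagonal_mul]
        by_cases hij : i = j
        · subst hij; ring
        · rw [hz i j hij]; ring
      · funext i
        rw [mulVec_offdiag (fun j hj => hz i j (Ne.symm hj))]
        by_cases hMi : M i = 0
        · rw [hMi, mul_zero]
        · rw [((pin_entries (hpin i (fun hc => hMi hc.1))).2.1), one_mul]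
      · funext i
        rw [mulVec_offdiag (fun j hj => hz i j (Ne.symm hj))]
        by_cases hKi : K i = 0
        · rw [hKi, mul_zero]
        · rw [((pin_entries (hpin i (fun hc => hKi hc.2))).2.1), one_mul]
  by_cases p0 : M 0 = 0 ∧ K 0 = 0 <;> by_cases p1 : M 1 = 0 ∧ K 1 = 0 <;>
    by_cases p2 : M 2 = 0 ∧ K 2 = 0
  -- TTT : all free
  · refine Or.inr (Or.inr (Or.inr (Or.inl (classify_Z2Z2Z2 G fun R => ?_))))
    rw [hchar]
    constructor
    · exact fun h => h.1
    · intro hz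
      refine ⟨hz, ?_⟩
      intro i hi
      fin_cases i
      · exact absurd p0 hi
      · exact absurd p1 hi
      · exact absurd p2 hi
  -- TTF : free 0 1, pin 2
  · refine Or.inr (Or.inr (Or.inl (classify_Z2Z2 G fun R => ?_)))
    rw [hchar]
    constructor
    · rintro ⟨hz, hpin⟩
      exact ⟨hpin 2 p2, hz 0 1 (by decide), hz 1 0 (by decide)⟩
    · rintro ⟨hp2, hz01, hz10⟩
      obtain ⟨hc2, hd2, hr2⟩ := pin_entries hp2
      refine ⟨?_, ?_⟩
      · intro i j hij
        fin_cases i <;> fin_cases j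
        · exact absurd rfl hij
        · exact hz01
        · exact hc2 0 (by decide)
        · exact hz10
        · exact absurd rfl hij
        · exact hc2 1 (by decide)
        · exact hr2 0 (by decide)
        · exact hr2 1 (by decide)
        · exact absurd rfl hij
      · intro i hi
        fin_cases i
        · exact absurd p0 hi
        · exact absurd p1 hi
        · exact hp2
  -- TFT : free 0 2, pin 1  (conjugate by swap 1 2)
  · have hchar' : ∀ R : O3, R ∈ G ↔
        ((R:Mat) *ᵥ Pi.single 1 1 = Pi.single 1 1 ∧ (R:Mat) 0 2 = 0 ∧ (R:Mat) 2 0 = 0) := by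
      intro R
      rw [hchar]
      constructor
      · rintro ⟨hz, hpin⟩
        exact ⟨hpin 1 p1, hz 0 2 (by decide), hz 2 0 (by decide)⟩
      · rintro ⟨hp1, hz02, hz20⟩
        obtain ⟨hc1, hd1, hr1⟩ := pin_entries hp1
        refine ⟨?_, ?_⟩
        · intro i j hij
          fin_cases i <;> fin_cases j
          · exact absurd rfl hij
          · exact hc1 0 (by decide)
          · exact hz02
          · exact hr1 0 (by decide)
          · exact absurd rfl hij
          · exact hr1 2 (by decide)
          · exact hz20
          · exact hc1 2 (by decide)
          · exact absurd rfl hij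
        · intro i hi
          fin_cases i
          · exact absurd p0 hi
          · exact hp1
          · exact absurd p2 hi
    refine disj_map_conj G (pmO3 (Equiv.swap 1 2)) ?_
    refine Or.inr (Or.inr (Or.inl (classify_Z2Z2 _ fun R => ?_)))
    rw [mem_map_conj, hchar', conj_pm_coe, pm_conj_pin, pm_conj_entry, pm_conj_entry]
    rw [show (Equiv.swap 1 2 : Equiv.Perm (Fin 3)) 1 = 2 from by decide,
        show (Equiv.swap 1 2 : Equiv.Perm (Fin 3)) 0 = 0 from by decide,
        show (Equiv.swap 1 2 : Equiv.Perm (Fin 3)) 2 = 1 from by decide]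
  -- TFF : free 0, pins 1 2
  · refine Or.inr (Or.inl (classify_Z2 G fun R => ?_))
    rw [hchar]
    constructor
    · rintro ⟨hz, hpin⟩
      exact ⟨hpin 1 p1, hpin 2 p2⟩
    · rintro ⟨hp1, hp2⟩
      obtain ⟨hc1, hd1, hr1⟩ := pin_entries hp1
      obtain ⟨hc2, hd2, hr2⟩ := pin_entries hp2
      refine ⟨?_, ?_⟩
      · intro i j hij
        fin_cases i <;> fin_cases j
        · exact absurd rfl hij
        · exact hc1 0 (by decide)
        · exact hc2 0 (by decide)
        · exact hr1 0 (by decide)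
        · exact absurd rfl hij
        · exact hc2 1 (by decide)
        · exact hr2 0 (by decide)
        · exact hr2 1 (by decide)
        · exact absurd rfl hij
      · intro i hi
        fin_cases i
        · exact absurd p0 hi
        · exact hp1
        · exact hp2
  -- FTT : free 1 2, pin 0  (conjugate by swap 0 2)
  · have hchar' : ∀ R : O3, R ∈ G ↔
        ((R:Mat) *ᵥ Pi.single 0 1 = Pi.single 0 1 ∧ (R:Mat) 1 2 = 0 ∧ (R:Mat) 2 1 = 0) := by
      intro R
      rw [hchar]
      constructor
      · rintro ⟨hz, hpin⟩
        exact ⟨hpin 0 p0, hz 1 2 (by decide), hz 2 1 (by decide)⟩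
      · rintro ⟨hp0, hz12, hz21⟩
        obtain ⟨hc0, hd0, hr0⟩ := pin_entries hp0
        refine ⟨?_, ?_⟩
        · intro i j hij
          fin_cases i <;> fin_cases j
          · exact absurd rfl hij
          · exact hr0 1 (by decide)
          · exact hr0 2 (by decide)
          · exact hc0 1 (by decide)
          · exact absurd rfl hij
          · exact hz12
          · exact hc0 2 (by decide)
          · exact hz21
          · exact absurd rfl hij
        · intro i hi
          fin_cases i
          · exact hp0
          · exact absurd p1 hi
          · exact absurd p2 hi
    refine disj_map_conj G (pmO3 (Equiv.swap 0 2)) ?_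
    refine Or.inr (Or.inr (Or.inl (classify_Z2Z2 _ fun R => ?_)))
    rw [mem_map_conj, hchar', conj_pm_coe, pm_conj_pin, pm_conj_entry, pm_conj_entry]
    rw [show (Equiv.swap 0 2 : Equiv.Perm (Fin 3)) 0 = 2 from by decide,
        show (Equiv.swap 0 2 : Equiv.Perm (Fin 3)) 1 = 1 from by decide,
        show (Equiv.swap 0 2 : Equiv.Perm (Fin 3)) 2 = 0 from by decide]
    tauto
  -- FTF : free 1, pins 0 2  (conjugate by swap 0 1)
  · have hchar' : ∀ R : O3, R ∈ G ↔
        ((R:Mat) *ᵥ Pi.single 0 1 = Pi.single 0 1 ∧ (R:Mat) *ᵥ Pi.single 2 1 = Pi.single 2 1) := by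
      intro R
      rw [hchar]
      constructor
      · rintro ⟨hz, hpin⟩
        exact ⟨hpin 0 p0, hpin 2 p2⟩
      · rintro ⟨hp0, hp2⟩
        obtain ⟨hc0, hd0, hr0⟩ := pin_entries hp0
        obtain ⟨hc2, hd2, hr2⟩ := pin_entries hp2
        refine ⟨?_, ?_⟩
        · intro i j hij
          fin_cases i <;> fin_cases j
          · exact absurd rfl hij
          · exact hr0 1 (by decide)
          · exact hr0 2 (by decide)
          · exact hc0 1 (by decide)
          · exact absurd rfl hij
          · exact hc2 1 (by decide)
          · exact hc0 2 (by decide)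
          · exact hr2 1 (by decide)
          · exact absurd rfl hij
        · intro i hi
          fin_cases i
          · exact hp0
          · exact absurd p1 hi
          · exact hp2
    refine disj_map_conj G (pmO3 (Equiv.swap 0 1)) ?_
    refine Or.inr (Or.inl (classify_Z2 _ fun R => ?_))
    rw [mem_map_conj, hchar', conj_pm_coe, pm_conj_pin, pm_conj_pin]
    rw [show (Equiv.swap 0 1 : Equiv.Perm (Fin 3)) 0 = 1 from by decide,
        show (Equiv.swap 0 1 : Equiv.Perm (Fin 3)) 2 = 2 from by decide]
  -- FFT : free 2, pins 0 1  (conjugate by swap 0 2)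
  · have hchar' : ∀ R : O3, R ∈ G ↔
        ((R:Mat) *ᵥ Pi.single 0 1 = Pi.single 0 1 ∧ (R:Mat) *ᵥ Pi.single 1 1 = Pi.single 1 1) := by
      intro R
      rw [hchar]
      constructor
      · rintro ⟨hz, hpin⟩
        exact ⟨hpin 0 p0, hpin 1 p1⟩
      · rintro ⟨hp0, hp1⟩
        obtain ⟨hc0, hd0, hr0⟩ := pin_entries hp0
        obtain ⟨hc1, hd1, hr1⟩ := pin_entries hp1
        refine ⟨?_, ?_⟩
        · intro i j hij
          fin_cases i <;> fin_cases j
          · exact absurd rfl hij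
          · exact hc1 0 (by decide)
          · exact hr0 2 (by decide)
          · exact hc0 1 (by decide)
          · exact absurd rfl hij
          · exact hr1 2 (by decide)
          · exact hc0 2 (by decide)
          · exact hc1 2 (by decide)
          · exact absurd rfl hij
        · intro i hi
          fin_cases i
          · exact hp0
          · exact hp1
          · exact absurd p2 hi
    refine disj_map_conj G (pmO3 (Equiv.swap 0 2)) ?_
    refine Or.inr (Or.inl (classify_Z2 _ fun R => ?_))
    rw [mem_map_conj, hchar', conj_pm_coe, pm_conj_pin, pm_conj_pin]
    rw [show (Equiv.swap 0 2 : Equiv.Perm (Fin 3)) 0 = 2 from by decide,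
        show (Equiv.swap 0 2 : Equiv.Perm (Fin 3)) 1 = 1 from by decide]
    tauto
  -- FFF : all pinned
  · refine Or.inl (classify_trivial G fun R => ?_)
    rw [hchar]
    constructor
    · rintro ⟨hz, hpin⟩
      refine all_pins_one ?_
      intro j
      fin_cases j
      · exact hpin 0 p0
      · exact hpin 1 p1
      · exact hpin 2 p2
    · rintro rfl
      constructor
      · intro i j hij
        exact Matrix.one_apply_ne hij
      · intro i _
        rw [show ((1 : O3) : Mat) = (1 : Mat) from rfl, Matrix.one_mulVec]

/-! ### Householder reflections -/

noncomputable def house (u : Fin 3 → ℝ) : Mat := 1 - (2 / (u ⬝ᵥ u)) • vecMulVec u u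

lemma vecMulVec_sq (u : Fin 3 → ℝ) :
    vecMulVec u u * vecMulVec u u = (u ⬝ᵥ u) • vecMulVec u u := by
  ext i j
  simp only [Matrix.mul_apply, Matrix.vecMulVec_apply, Matrix.smul_apply, dotProduct,
    smul_eq_mul]
  rw [Finset.sum_congr rfl
    (fun k _ => (by ring : u i * u k * (u k * u j) = (u k * u k) * (u i * u j))),
    ← Finset.sum_mul, Finset.sum_mul]

lemma house_transpose (u : Fin 3 → ℝ) : (house u)ᵀ = house u := by
  ext i j
  simp only [house, Matrix.transpose_apply, Matrix.sub_apply, Matrix.smul_apply,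
    Matrix.one_apply, Matrix.vecMulVec_apply, smul_eq_mul]
  by_cases hij : i = j
  · subst hij; ring
  · rw [if_neg hij, if_neg (Ne.symm hij)]; ring

lemma house_mul_self (u : Fin 3 → ℝ) (hu : u ≠ 0) : house u * house u = 1 := by
  have hd : u ⬝ᵥ u ≠ 0 := fun hc => hu (dotProduct_self_eq_zero.mp hc)
  have hPP := vecMulVec_sq u
  unfold house
  set c := 2 / (u ⬝ᵥ u) with hc
  set P := vecMulVec u u with hp
  calc (1 - c•P) * (1 - c•P) = 1 - c•P - c•P + (c * c) • (P * P) := by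
        simp only [sub_mul, mul_sub, one_mul, mul_one, Matrix.smul_mul, Matrix.mul_smul,
          smul_smul]
        abel
    _ = 1 - c•P - c•P + (c * c * (u ⬝ᵥ u)) • P := by rw [hPP, smul_smul]
    _ = 1 := by
        have hgen : ∀ x : ℝ, x ≠ 0 → (2/x) * (2/x) * x = 2/x + 2/x := by
          intro x hx; field_simp; ring
        have hc' : c * c * (u ⬝ᵥ u) = c + c := by
          rw [hc]; exact hgen _ hd
        rw [hc', add_smul]
        abel

lemma house_memO3 (u : Fin 3 → ℝ) (hu : u ≠ 0) :
    house u ∈ Matrix.orthogonalGroup (Fin 3) ℝ := by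
  rw [Matrix.mem_orthogonalGroup_iff]
  have : star (house u) = (house u)ᵀ := rfl
  rw [house_transpose]
  exact house_mul_self u hu

lemma house_mulVec {v w : Fin 3 → ℝ} (hvw : v ⬝ᵥ v = w ⬝ᵥ w) (hu : v - w ≠ 0) :
    house (v - w) *ᵥ v = w := by
  set u := v - w with hu'
  have huv : u ⬝ᵥ u = 2 * (u ⬝ᵥ v) := by
    have h1 : u ⬝ᵥ u = v ⬝ᵥ v - v ⬝ᵥ w - (w ⬝ᵥ v - w ⬝ᵥ w) := by
      rw [hu']
      rw [sub_dotProduct, dotProduct_sub, dotProduct_sub]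
    have h2 : u ⬝ᵥ v = v ⬝ᵥ v - w ⬝ᵥ v := by
      rw [hu', sub_dotProduct]
    have h3 : w ⬝ᵥ v = v ⬝ᵥ w := dotProduct_comm w v
    rw [h1, h2]
    rw [hvw] at *
    linarith [h3]
  have hd : u ⬝ᵥ u ≠ 0 := fun hc => hu (dotProduct_self_eq_zero.mp hc)
  unfold house
  rw [Matrix.sub_mulVec, Matrix.one_mulVec, Matrix.smul_mulVec]
  have hP : vecMulVec u u *ᵥ v = (u ⬝ᵥ v) • u := by
    funext i
    show ∑ k, (u i * u k) * v k = _
    rw [Finset.sum_congr rfl (fun k _ => (by ring : u i * u k * v k = (u k * v k) * u i)),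
      ← Finset.sum_mul]
    show (u ⬝ᵥ v) * u i = _
    simp [mul_comm]
  rw [hP, smul_smul]
  have hone : 2 / (u ⬝ᵥ u) * (u ⬝ᵥ v) = 1 := by
    have huv0 : u ⬝ᵥ v ≠ 0 := by
      intro hc
      rw [hc, mul_zero] at huv
      exact hd huv
    rw [huv]
    generalize u ⬝ᵥ v = x at huv0 ⊢
    field_simp
  rw [hone, one_smul, hu']
  abel

lemma house_entry_one {u : Fin 3 → ℝ} {i j : Fin 3} (h : u i = 0 ∨ u j = 0) :
    house u i j = (1:Mat) i j := by
  have : house u i j = (1:Mat) i j - (2/(u ⬝ᵥ u)) * (u i * u j) := by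
    simp [house, Matrix.vecMulVec_apply]
  rw [this]
  rcases h with h | h <;> rw [h] <;> ring

noncomputable def rotO3 (v w : Fin 3 → ℝ) : O3 :=
  if h : v - w = 0 then 1 else ⟨house (v - w), house_memO3 _ h⟩

lemma rotO3_mulVec {v w : Fin 3 → ℝ} (hvw : v ⬝ᵥ v = w ⬝ᵥ w) :
    (rotO3 v w : Mat) *ᵥ v = w := by
  unfold rotO3
  split
  · next h =>
    have : v = w := by
      have := sub_eq_zero.mp h
      exact this
    rw [this]
    show (1 : Mat) *ᵥ w = w
    exact Matrix.one_mulVec w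
  · next h => exact house_mulVec hvw h

lemma rotO3_entry {v w : Fin 3 → ℝ} {i j : Fin 3} (h : (v - w) i = 0 ∨ (v - w) j = 0) :
    ((rotO3 v w : O3) : Mat) i j = (1:Mat) i j := by
  unfold rotO3
  split
  · rfl
  · exact house_entry_one h

/-! ### vector helpers -/

lemma dot_self_pos {v : Fin 3 → ℝ} (hv : v ≠ 0) : 0 < v ⬝ᵥ v := by
  rcases lt_or_eq_of_le (Finset.sum_nonneg fun i _ => mul_self_nonneg (v i)) with h | h
  · exact h
  · exact absurd (dotProduct_self_eq_zero.mp h.symm) hv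

lemma single_self_dot (i : Fin 3) (c : ℝ) :
    (c • (Pi.single i 1 : Fin 3 → ℝ)) ⬝ᵥ (c • (Pi.single i 1 : Fin 3 → ℝ)) = c * c := by
  rw [smul_dotProduct, dotProduct_smul, dotProduct_single]
  simp

lemma fix_smul_single {R : O3} {c : ℝ} (hc : c ≠ 0) {i : Fin 3}
    (h : (R:Mat) *ᵥ (c • (Pi.single i 1 : Fin 3 → ℝ)) = c • (Pi.single i 1 : Fin 3 → ℝ)) :
    (R:Mat) *ᵥ Pi.single i 1 = Pi.single i 1 := by
  rw [Matrix.mulVec_smul] at h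
  exact smul_right_injective _ hc h

lemma fix_smul_single' {R : O3} (c : ℝ) {i : Fin 3}
    (h : (R:Mat) *ᵥ Pi.single i 1 = Pi.single i 1) :
    (R:Mat) *ᵥ (c • (Pi.single i 1 : Fin 3 → ℝ)) = c • (Pi.single i 1 : Fin 3 → ℝ) := by
  rw [Matrix.mulVec_smul, h]

/-! ### more rotation helpers -/

lemma rot_pin {v w : Fin 3 → ℝ} {i : Fin 3} (h : (v - w) i = 0) :
    ((rotO3 v w : O3) : Mat) *ᵥ Pi.single i 1 = Pi.single i 1 := by
  rw [pin_iff]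
  intro k
  rw [rotO3_entry (Or.inr h)]
  rfl

lemma sg_swapMK (A : Mat) (M K : Fin 3 → ℝ) : sg A M K = sg A K M := by
  ext R
  rw [mem_sg, mem_sg]
  tauto

lemma scalar_conj (d : Fin 3 → ℝ) (hd1 : d 1 = d 0) (hd2 : d 2 = d 0) (R : O3) :
    (R:Mat) * diagonal d * (R:Mat)ᵀ = diagonal d := by
  have hdd : diagonal d = d 0 • (1 : Mat) := by
    ext i j
    by_cases hij : i = j
    · subst hij
      rw [Matrix.diagonal_apply_eq]
      fin_cases i <;> simp [Matrix.one_apply, hd1, hd2]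
    · rw [Matrix.diagonal_apply_ne _ hij]
      simp [Matrix.one_apply, hij]
  rw [hdd, Matrix.mul_smul, Matrix.smul_mul, mul_one, o3_orth]

lemma case_scalar_aux (d M K : Fin 3 → ℝ) (hd1 : d 1 = d 0) (hd2 : d 2 = d 0) (hM : M ≠ 0) :
    Disj (sg (diagonal d) M K) := by
  have hmem : ∀ (M' K' : Fin 3 → ℝ) (R : O3), R ∈ sg (diagonal d) M' K' ↔
      ((R:Mat) *ᵥ M' = M' ∧ (R:Mat) *ᵥ K' = K') := by
    intro M' K' R
    rw [mem_sg]
    exact ⟨fun h => ⟨h.2.1, h.2.2⟩, fun h => ⟨scalar_conj d hd1 hd2 R, h.1, h.2⟩⟩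
  have hMpos : 0 < M ⬝ᵥ M := dot_self_pos hM
  have hs0 : Real.sqrt (M ⬝ᵥ M) ≠ 0 := ne_of_gt (Real.sqrt_pos.mpr hMpos)
  have hnorm : M ⬝ᵥ M = (Real.sqrt (M ⬝ᵥ M) • (Pi.single 2 1 : Fin 3 → ℝ)) ⬝ᵥ
      (Real.sqrt (M ⬝ᵥ M) • (Pi.single 2 1 : Fin 3 → ℝ)) := by
    rw [single_self_dot, Real.mul_self_sqrt hMpos.le]
  refine disj_of_equiv
    (sgConj (diagonal d) M K (rotO3 M (Real.sqrt (M ⬝ᵥ M) • (Pi.single 2 1 : Fin 3 → ℝ)))) ?_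
  rw [scalar_conj d hd1 hd2, rotO3_mulVec hnorm]
  set K' := ((rotO3 M (Real.sqrt (M ⬝ᵥ M) • (Pi.single 2 1 : Fin 3 → ℝ)) : O3) : Mat) *ᵥ K
    with hK'
  by_cases hk : K' - K' 2 • (Pi.single 2 1 : Fin 3 → ℝ) = 0
  · have hKe : K' = K' 2 • (Pi.single 2 1 : Fin 3 → ℝ) := by rwa [sub_eq_zero] at hk
    refine Or.inr (Or.inr (Or.inr (Or.inr (Or.inl (classify_O2 _ fun R => ?_)))))
    rw [hmem]
    constructor
    · rintro ⟨h1, _⟩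
      exact fix_smul_single hs0 h1
    · intro hpin
      exact ⟨fix_smul_single' _ hpin, by rw [hKe]; exact fix_smul_single' _ hpin⟩
  · have hk2 : (K' - K' 2 • (Pi.single 2 1 : Fin 3 → ℝ)) 2 = 0 := by
      simp
    have hkpos : 0 < (K' - K' 2 • (Pi.single 2 1 : Fin 3 → ℝ)) ⬝ᵥ
        (K' - K' 2 • (Pi.single 2 1 : Fin 3 → ℝ)) := dot_self_pos hk
    have ht0 : Real.sqrt ((K' - K' 2 • (Pi.single 2 1 : Fin 3 → ℝ)) ⬝ᵥ
        (K' - K' 2 • (Pi.single 2 1 : Fin 3 → ℝ))) ≠ 0 :=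
      ne_of_gt (Real.sqrt_pos.mpr hkpos)
    set k' := K' - K' 2 • (Pi.single 2 1 : Fin 3 → ℝ) with hk'def
    set t := Real.sqrt (k' ⬝ᵥ k') with ht
    have hnorm2 : k' ⬝ᵥ k' = (t • (Pi.single 1 1 : Fin 3 → ℝ)) ⬝ᵥ
        (t • (Pi.single 1 1 : Fin 3 → ℝ)) := by
      rw [single_self_dot, ht, Real.mul_self_sqrt hkpos.le]
    have hsupp : (k' - t • (Pi.single 1 1 : Fin 3 → ℝ)) 2 = 0 := by
      have : (t • (Pi.single 1 1 : Fin 3 → ℝ)) 2 = 0 := by simp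
      simp only [Pi.sub_apply, this, hk2, sub_zero]
    have hQ2e2 : ((rotO3 k' (t • (Pi.single 1 1 : Fin 3 → ℝ)) : O3) : Mat) *ᵥ
        (Pi.single 2 1 : Fin 3 → ℝ) = Pi.single 2 1 := rot_pin hsupp
    refine disj_of_equiv
      (sgConj (diagonal d) (Real.sqrt (M ⬝ᵥ M) • (Pi.single 2 1 : Fin 3 → ℝ)) K'
        (rotO3 k' (t • (Pi.single 1 1 : Fin 3 → ℝ)))) ?_
    rw [scalar_conj d hd1 hd2]
    rw [Matrix.mulVec_smul, hQ2e2]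
    have hQ2K' : ((rotO3 k' (t • (Pi.single 1 1 : Fin 3 → ℝ)) : O3) : Mat) *ᵥ K'
        = t • (Pi.single 1 1 : Fin 3 → ℝ) + K' 2 • (Pi.single 2 1 : Fin 3 → ℝ) := by
      have hKdec : K' = k' + K' 2 • (Pi.single 2 1 : Fin 3 → ℝ) := by
        rw [hk'def]; abel
      conv_lhs => rw [hKdec]
      rw [Matrix.mulVec_add, rotO3_mulVec hnorm2, Matrix.mulVec_smul, hQ2e2]
    rw [hQ2K']
    refine Or.inr (Or.inl (classify_Z2 _ fun R => ?_))
    rw [hmem]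
    constructor
    · rintro ⟨h1, h2⟩
      have hpin2 : (R:Mat) *ᵥ (Pi.single 2 1 : Fin 3 → ℝ) = Pi.single 2 1 :=
        fix_smul_single hs0 h1
      refine ⟨?_, hpin2⟩
      rw [Matrix.mulVec_add, Matrix.mulVec_smul, Matrix.mulVec_smul, hpin2] at h2
      have h3 : (R:Mat) *ᵥ (Pi.single 1 1 : Fin 3 → ℝ) = Pi.single 1 1 := by
        have h4 := add_right_cancel h2
        exact smul_right_injective _ ht0 h4
      exact h3
    · rintro ⟨hp1, hp2⟩
      refine ⟨fix_smul_single' _ hp2, ?_⟩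
      rw [Matrix.mulVec_add, Matrix.mulVec_smul, Matrix.mulVec_smul, hp1, hp2]

lemma case_scalar (d M K : Fin 3 → ℝ) (hd1 : d 1 = d 0) (hd2 : d 2 = d 0) :
    Disj (sg (diagonal d) M K) := by
  by_cases hM : M = 0
  · by_cases hK : K = 0
    · subst hM; subst hK
      refine Or.inr (Or.inr (Or.inr (Or.inr (Or.inr (Or.inr (classify_O3 _ fun R => ?_))))))
      exact ⟨scalar_conj d hd1 hd2 R, Matrix.mulVec_zero _, Matrix.mulVec_zero _⟩
    · rw [sg_swapMK]
      exact case_scalar_aux d K M hd1 hd2 hK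
  · exact case_scalar_aux d M K hd1 hd2 hM

/-! ### two equal eigenvalues -/

lemma rot_comp {v w : Fin 3 → ℝ} {i : Fin 3} (h : (v - w) i = 0) (x : Fin 3 → ℝ) :
    (((rotO3 v w : O3) : Mat) *ᵥ x) i = x i := by
  show ∑ j, ((rotO3 v w : O3) : Mat) i j * x j = x i
  rw [Finset.sum_eq_single i]
  · rw [rotO3_entry (Or.inl h), Matrix.one_apply_eq, one_mul]
  · intro j _ hj
    rw [rotO3_entry (Or.inl h), Matrix.one_apply_ne (Ne.symm hj), zero_mul]
  · intro hi; exact absurd (Finset.mem_univ _) hi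

lemma rot_block_comm {v w d : Fin 3 → ℝ} (hsupp : (v - w) 2 = 0) (h01 : d 0 = d 1) :
    ((rotO3 v w : O3) : Mat) * diagonal d * ((rotO3 v w : O3) : Mat)ᵀ = diagonal d := by
  rw [comm_iff]
  have hdij : ∀ i j : Fin 3, i ≠ 2 → j ≠ 2 → d i = d j := by
    intro i j hi hj
    fin_cases i <;> fin_cases j <;>
      first
        | rfl
        | exact h01
        | exact h01.symm
        | exact absurd rfl hi
        | exact absurd rfl hj
  ext i j
  rw [Matrix.mul_diagonal, Matrix.diagonal_mul]
  by_cases hij : i = j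
  · subst hij; ring
  · by_cases h2' : i = 2 ∨ j = 2
    · have hz' : ((rotO3 v w : O3) : Mat) i j = 0 := by
        rcases h2' with h | h
        · rw [rotO3_entry (Or.inl (by rw [h]; exact hsupp))]
          exact Matrix.one_apply_ne hij
        · rw [rotO3_entry (Or.inr (by rw [h]; exact hsupp))]
          exact Matrix.one_apply_ne hij
      rw [hz']; ring
    · push_neg at h2'
      rw [hdij i j h2'.1 h2'.2]; ring

lemma mulVec_apply3 (X : Mat) (x : Fin 3 → ℝ) (i : Fin 3) :
    (X *ᵥ x) i = X i 0 * x 0 + X i 1 * x 1 + X i 2 * x 2 := by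
  show ∑ j, X i j * x j = _
  rw [Fin.sum_univ_three]

lemma comm_char_two {d : Fin 3 → ℝ} (h01 : d 0 = d 1) (h2 : d 2 ≠ d 0) (R : O3) :
    ((R:Mat) * diagonal d * (R:Mat)ᵀ = diagonal d) ↔
      ((R:Mat) 0 2 = 0 ∧ (R:Mat) 1 2 = 0 ∧ (R:Mat) 2 0 = 0 ∧ (R:Mat) 2 1 = 0) := by
  rw [comm_iff]
  have d02 : d 0 ≠ d 2 := fun hc => h2 hc.symm
  have d12 : d 1 ≠ d 2 := by rw [← h01]; exact d02
  have d21 : d 2 ≠ d 1 := fun hc => d12 hc.symm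
  have hdij : ∀ i j : Fin 3, i ≠ 2 → j ≠ 2 → d i = d j := by
    intro i j hi hj
    fin_cases i <;> fin_cases j <;>
      first
        | rfl
        | exact h01
        | exact h01.symm
        | exact absurd rfl hi
        | exact absurd rfl hj
  constructor
  · intro h
    exact ⟨comm_entry h d02, comm_entry h d12, comm_entry h h2, comm_entry h d21⟩
  · rintro ⟨z02, z12, z20, z21⟩
    ext i j
    rw [Matrix.mul_diagonal, Matrix.diagonal_mul]
    by_cases hij : i = j
    · subst hij; ring
    · by_cases h2' : i = 2 ∨ j = 2
      · have hz' : (R:Mat) i j = 0 := by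
          rcases h2' with h | h
          · subst h
            fin_cases j
            · exact z20
            · exact z21
            · exact absurd rfl hij
          · subst h
            fin_cases i
            · exact z02
            · exact z12
            · exact absurd rfl hij
        rw [hz']; ring
      · push_neg at h2'
        rw [hdij i j h2'.1 h2'.2]; ring

lemma fin3_cases (i : Fin 3) : i = 0 ∨ i = 1 ∨ i = 2 := by
  fin_cases i
  · exact Or.inl rfl
  · exact Or.inr (Or.inl rfl)
  · exact Or.inr (Or.inr rfl)

lemma fix_char3 {R : O3}
    (z02 : (R:Mat) 0 2 = 0) (z12 : (R:Mat) 1 2 = 0)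
    (z20 : (R:Mat) 2 0 = 0) (z21 : (R:Mat) 2 1 = 0) (x : Fin 3 → ℝ) :
    (R:Mat) *ᵥ x = x ↔ ((R:Mat) 0 0 * x 0 + (R:Mat) 0 1 * x 1 = x 0 ∧
                        (R:Mat) 1 0 * x 0 + (R:Mat) 1 1 * x 1 = x 1 ∧
                        (R:Mat) 2 2 * x 2 = x 2) := by
  constructor
  · intro h
    have h0 := congrFun h 0
    have h1 := congrFun h 1
    have h22 := congrFun h 2
    rw [mulVec_apply3] at h0 h1 h22
    rw [z02] at h0
    rw [z12] at h1
    rw [z20, z21] at h22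
    refine ⟨by linarith, by linarith, by linarith⟩
  · rintro ⟨h0, h1, h22⟩
    funext i
    rcases fin3_cases i with rfl | rfl | rfl
    · rw [mulVec_apply3, z02]; linarith
    · rw [mulVec_apply3, z12]; linarith
    · rw [mulVec_apply3, z20, z21]; linarith

lemma case_two_aux (d M K : Fin 3 → ℝ) (h01 : d 0 = d 1) (h2 : d 2 ≠ d 0)
    (hm : M - M 2 • (Pi.single 2 1 : Fin 3 → ℝ) ≠ 0) :
    Disj (sg (diagonal d) M K) := by
  have hm2 : (M - M 2 • (Pi.single 2 1 : Fin 3 → ℝ)) 2 = 0 := by simp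
  have hmpos := dot_self_pos hm
  set m := M - M 2 • (Pi.single 2 1 : Fin 3 → ℝ) with hmdef
  set t1 := Real.sqrt (m ⬝ᵥ m) with ht1
  have ht1pos : 0 < t1 := Real.sqrt_pos.mpr hmpos
  have ht10 : t1 ≠ 0 := ne_of_gt ht1pos
  have hnorm : m ⬝ᵥ m = (t1 • (Pi.single 1 1 : Fin 3 → ℝ)) ⬝ᵥ
      (t1 • (Pi.single 1 1 : Fin 3 → ℝ)) := by
    rw [single_self_dot, ht1, Real.mul_self_sqrt hmpos.le]
  have hsupp : (m - t1 • (Pi.single 1 1 : Fin 3 → ℝ)) 2 = 0 := by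
    have h' : (t1 • (Pi.single 1 1 : Fin 3 → ℝ)) 2 = 0 := by simp
    simp only [Pi.sub_apply, hm2, h', sub_zero]
  refine disj_of_equiv
    (sgConj (diagonal d) M K (rotO3 m (t1 • (Pi.single 1 1 : Fin 3 → ℝ)))) ?_
  rw [rot_block_comm hsupp h01]
  have hQe2 : ((rotO3 m (t1 • (Pi.single 1 1 : Fin 3 → ℝ)) : O3) : Mat) *ᵥ
      (Pi.single 2 1 : Fin 3 → ℝ) = Pi.single 2 1 := rot_pin hsupp
  have hQM : ((rotO3 m (t1 • (Pi.single 1 1 : Fin 3 → ℝ)) : O3) : Mat) *ᵥ M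
      = t1 • (Pi.single 1 1 : Fin 3 → ℝ) + M 2 • (Pi.single 2 1 : Fin 3 → ℝ) := by
    have hMdec : M = m + M 2 • (Pi.single 2 1 : Fin 3 → ℝ) := by rw [hmdef]; abel
    conv_lhs => rw [hMdec]
    rw [Matrix.mulVec_add, rotO3_mulVec hnorm, Matrix.mulVec_smul, hQe2]
  rw [hQM]
  set K' := ((rotO3 m (t1 • (Pi.single 1 1 : Fin 3 → ℝ)) : O3) : Mat) *ᵥ K with hK'
  have hK'2 : K' 2 = K 2 := by rw [hK']; exact rot_comp hsupp K
  -- component values of the new M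
  have hM'0 : (t1 • (Pi.single 1 1 : Fin 3 → ℝ) + M 2 • (Pi.single 2 1 : Fin 3 → ℝ)) 0 = 0 := by
    simp
  have hM'1 : (t1 • (Pi.single 1 1 : Fin 3 → ℝ) + M 2 • (Pi.single 2 1 : Fin 3 → ℝ)) 1 = t1 := by
    simp
  have hM'2 : (t1 • (Pi.single 1 1 : Fin 3 → ℝ) + M 2 • (Pi.single 2 1 : Fin 3 → ℝ)) 2 = M 2 := by
    simp [Pi.single_apply]
  -- membership characterization
  have hmem : ∀ R : O3, R ∈ sg (diagonal d)
      (t1 • (Pi.single 1 1 : Fin 3 → ℝ) + M 2 • (Pi.single 2 1 : Fin 3 → ℝ)) K' ↔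
      (((R:Mat) 0 2 = 0 ∧ (R:Mat) 1 2 = 0 ∧ (R:Mat) 2 0 = 0 ∧ (R:Mat) 2 1 = 0) ∧
       ((R:Mat) 0 1 = 0 ∧ (R:Mat) 1 1 = 1 ∧ (R:Mat) 2 2 * M 2 = M 2) ∧
       ((R:Mat) 0 0 * K' 0 + (R:Mat) 0 1 * K' 1 = K' 0 ∧
        (R:Mat) 1 0 * K' 0 + (R:Mat) 1 1 * K' 1 = K' 1 ∧
        (R:Mat) 2 2 * K' 2 = K' 2)) := by
    intro R
    rw [mem_sg, comm_char_two h01 h2]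
    constructor
    · rintro ⟨hz, hM, hK⟩
      obtain ⟨z02, z12, z20, z21⟩ := hz
      have hMc := (fix_char3 z02 z12 z20 z21 _).mp hM
      rw [hM'0, hM'1, hM'2] at hMc
      obtain ⟨c0, c1, c2⟩ := hMc
      refine ⟨⟨z02, z12, z20, z21⟩, ⟨?_, ?_, c2⟩, (fix_char3 z02 z12 z20 z21 _).mp hK⟩
      · have : (R:Mat) 0 1 * t1 = 0 := by linarith
        exact (mul_eq_zero.mp this).resolve_right ht10
      · have : (R:Mat) 1 1 * t1 = t1 := by linarith
        have h' := mul_right_cancel₀ ht10 (by rw [this, one_mul] : (R:Mat) 1 1 * t1 = 1 * t1)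
        exact h'
    · rintro ⟨⟨z02, z12, z20, z21⟩, ⟨c01, c11, c22⟩, hKc⟩
      refine ⟨⟨z02, z12, z20, z21⟩, ?_, (fix_char3 z02 z12 z20 z21 _).mpr hKc⟩
      rw [fix_char3 z02 z12 z20 z21, hM'0, hM'1, hM'2]
      refine ⟨by rw [c01]; ring, by rw [c11]; ring, c22⟩
  by_cases hK0 : K' 0 = 0
  · -- K' block part is a multiple of e₁
    by_cases h22 : M 2 = 0 ∧ K' 2 = 0
    · -- free : 0 and 2 ; pin 1.  conjugate by swap 1 2, get Z2 × Z2
      have hchar : ∀ R : O3, R ∈ sg (diagonal d)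
          (t1 • (Pi.single 1 1 : Fin 3 → ℝ) + M 2 • (Pi.single 2 1 : Fin 3 → ℝ)) K' ↔
          ((R:Mat) *ᵥ Pi.single 1 1 = Pi.single 1 1 ∧ (R:Mat) 0 2 = 0 ∧ (R:Mat) 2 0 = 0) := by
        intro R
        rw [hmem]
        constructor
        · rintro ⟨⟨z02, z12, z20, z21⟩, ⟨c01, c11, _⟩, _⟩
          refine ⟨?_, z02, z20⟩
          rw [pin_iff]
          intro k
          rcases fin3_cases k with rfl | rfl | rfl
          · rw [if_neg (by decide)]; exact c01
          · rw [if_pos rfl]; exact c11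
          · rw [if_neg (by decide)]; exact z21
        · rintro ⟨hp1, z02, z20⟩
          obtain ⟨hc1, hd1, hr1⟩ := pin_entries hp1
          refine ⟨⟨z02, hr1 2 (by decide), z20, hc1 2 (by decide)⟩,
            ⟨hc1 0 (by decide), hd1, by rw [h22.1]; ring⟩,
            by rw [hK0, hc1 0 (by decide)]; ring,
            by rw [hK0, hd1]; ring,
            by rw [h22.2]; ring⟩
      refine disj_map_conj _ (pmO3 (Equiv.swap 1 2)) ?_
      refine Or.inr (Or.inr (Or.inl (classify_Z2Z2 _ fun R => ?_)))
      rw [mem_map_conj, hchar, conj_pm_coe, pm_conj_pin, pm_conj_entry, pm_conj_entry]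
      rw [show (Equiv.swap 1 2 : Equiv.Perm (Fin 3)) 1 = 2 from by decide,
          show (Equiv.swap 1 2 : Equiv.Perm (Fin 3)) 0 = 0 from by decide,
          show (Equiv.swap 1 2 : Equiv.Perm (Fin 3)) 2 = 1 from by decide]
    · -- pins 1 and 2 : Z2
      refine Or.inr (Or.inl (classify_Z2 _ fun R => ?_))
      rw [hmem]
      constructor
      · rintro ⟨⟨z02, z12, z20, z21⟩, ⟨c01, c11, c22M⟩, _, _, c22K⟩
        have hR22 : (R:Mat) 2 2 = 1 := by
          rcases not_and_or.mp h22 with h' | h'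
          · exact mul_right_cancel₀ h' (by rw [c22M, one_mul])
          · exact mul_right_cancel₀ h' (by rw [c22K, one_mul])
        constructor
        · rw [pin_iff]
          intro k
          rcases fin3_cases k with rfl | rfl | rfl
          · rw [if_neg (by decide)]; exact c01
          · rw [if_pos rfl]; exact c11
          · rw [if_neg (by decide)]; exact z21
        · rw [pin_iff]
          intro k
          rcases fin3_cases k with rfl | rfl | rfl
          · rw [if_neg (by decide)]; exact z02
          · rw [if_neg (by decide)]; exact z12
          · rw [if_pos rfl]; exact hR22
      · rintro ⟨hp1, hp2⟩
        obtain ⟨hc1, hd1, hr1⟩ := pin_entries hp1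
        obtain ⟨hc2, hd2, hr2⟩ := pin_entries hp2
        exact ⟨⟨hc2 0 (by decide), hc2 1 (by decide), hr2 0 (by decide), hr2 1 (by decide)⟩,
          ⟨hc1 0 (by decide), hd1, by rw [hd2]; ring⟩,
          by rw [hK0, hc1 0 (by decide)]; ring,
          by rw [hK0, hd1]; ring,
          by rw [hd2]; ring⟩
  · -- K' has a component along e₀ : pins 0 and 1 at least
    have hpins : ∀ R : O3, R ∈ sg (diagonal d)
        (t1 • (Pi.single 1 1 : Fin 3 → ℝ) + M 2 • (Pi.single 2 1 : Fin 3 → ℝ)) K' →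
        ((R:Mat) *ᵥ Pi.single 0 1 = Pi.single 0 1 ∧ (R:Mat) *ᵥ Pi.single 1 1 = Pi.single 1 1) := by
      intro R hR
      obtain ⟨⟨z02, z12, z20, z21⟩, ⟨c01, c11, c22M⟩, k0eq, k1eq, c22K⟩ := (hmem R).mp hR
      have hR00 : (R:Mat) 0 0 = 1 := by
        have h' : (R:Mat) 0 0 * K' 0 = K' 0 := by rw [c01] at k0eq; linarith
        exact mul_right_cancel₀ hK0 (by rw [h', one_mul])
      have hR10 : (R:Mat) 1 0 = 0 := by
        have h' : (R:Mat) 1 0 * K' 0 = 0 := by rw [c11] at k1eq; linarith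
        exact (mul_eq_zero.mp h').resolve_right hK0
      constructor
      · rw [pin_iff]
        intro k
        rcases fin3_cases k with rfl | rfl | rfl
        · rw [if_pos rfl]; exact hR00
        · rw [if_neg (by decide)]; exact hR10
        · rw [if_neg (by decide)]; exact z20
      · rw [pin_iff]
        intro k
        rcases fin3_cases k with rfl | rfl | rfl
        · rw [if_neg (by decide)]; exact c01
        · rw [if_pos rfl]; exact c11
        · rw [if_neg (by decide)]; exact z21
    by_cases h22 : M 2 = 0 ∧ K' 2 = 0
    · -- free 2, pins 0 1 : Z2 after swapping 0 and 2
      have hchar : ∀ R : O3, R ∈ sg (diagonal d)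
          (t1 • (Pi.single 1 1 : Fin 3 → ℝ) + M 2 • (Pi.single 2 1 : Fin 3 → ℝ)) K' ↔
          ((R:Mat) *ᵥ Pi.single 0 1 = Pi.single 0 1 ∧
           (R:Mat) *ᵥ Pi.single 1 1 = Pi.single 1 1) := by
        intro R
        constructor
        · exact hpins R
        · rintro ⟨hp0, hp1⟩
          obtain ⟨hc0, hd0, hr0⟩ := pin_entries hp0
          obtain ⟨hc1, hd1, hr1⟩ := pin_entries hp1
          refine (hmem R).mpr ⟨⟨hr0 2 (by decide), hr1 2 (by decide),
            hc0 2 (by decide), hc1 2 (by decide)⟩,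
            ⟨hc1 0 (by decide), hd1, by rw [h22.1]; ring⟩,
            by rw [hd0, hc1 0 (by decide)]; ring,
            by rw [hc0 1 (by decide), hd1]; ring,
            by rw [h22.2]; ring⟩
      refine disj_map_conj _ (pmO3 (Equiv.swap 0 2)) ?_
      refine Or.inr (Or.inl (classify_Z2 _ fun R => ?_))
      rw [mem_map_conj, hchar, conj_pm_coe, pm_conj_pin, pm_conj_pin]
      rw [show (Equiv.swap 0 2 : Equiv.Perm (Fin 3)) 0 = 2 from by decide,
          show (Equiv.swap 0 2 : Equiv.Perm (Fin 3)) 1 = 1 from by decide]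
      tauto
    · -- everything pinned : trivial group
      refine Or.inl (classify_trivial _ fun R => ?_)
      constructor
      · intro hR
        obtain ⟨hp0, hp1⟩ := hpins R hR
        obtain ⟨⟨z02, z12, z20, z21⟩, ⟨c01, c11, c22M⟩, k0eq, k1eq, c22K⟩ := (hmem R).mp hR
        have hR22 : (R:Mat) 2 2 = 1 := by
          rcases not_and_or.mp h22 with h' | h'
          · exact mul_right_cancel₀ h' (by rw [c22M, one_mul])
          · exact mul_right_cancel₀ h' (by rw [c22K, one_mul])
        have hp2 : (R:Mat) *ᵥ (Pi.single 2 1 : Fin 3 → ℝ) = Pi.single 2 1 := by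
          rw [pin_iff]
          intro k
          rcases fin3_cases k with rfl | rfl | rfl
          · rw [if_neg (by decide)]; exact z02
          · rw [if_neg (by decide)]; exact z12
          · rw [if_pos rfl]; exact hR22
        refine all_pins_one ?_
        intro j
        rcases fin3_cases j with rfl | rfl | rfl
        · exact hp0
        · exact hp1
        · exact hp2
      · rintro rfl
        refine (hmem 1).mpr ?_
        have hone : ((1 : O3) : Mat) = (1 : Mat) := rfl
        rw [hone]
        refine ⟨⟨Matrix.one_apply_ne (by decide), Matrix.one_apply_ne (by decide),
          Matrix.one_apply_ne (by decide), Matrix.one_apply_ne (by decide)⟩,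
          ⟨Matrix.one_apply_ne (by decide), Matrix.one_apply_eq _, by rw [Matrix.one_apply_eq]; ring⟩,
          ?_, ?_, ?_⟩
        · rw [Matrix.one_apply_eq, Matrix.one_apply_ne (by decide)]; ring
        · rw [Matrix.one_apply_ne (by decide), Matrix.one_apply_eq]; ring
        · rw [Matrix.one_apply_eq]; ring

lemma case_two (d M K : Fin 3 → ℝ) (h01 : d 0 = d 1) (h2 : d 2 ≠ d 0) :
    Disj (sg (diagonal d) M K) := by
  by_cases hm : M - M 2 • (Pi.single 2 1 : Fin 3 → ℝ) = 0
  · by_cases hk : K - K 2 • (Pi.single 2 1 : Fin 3 → ℝ) = 0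
    · have hMe : M = M 2 • (Pi.single 2 1 : Fin 3 → ℝ) := by rwa [sub_eq_zero] at hm
      have hKe : K = K 2 • (Pi.single 2 1 : Fin 3 → ℝ) := by rwa [sub_eq_zero] at hk
      have hM0 : M 0 = 0 := by rw [hMe]; simp [Pi.single_apply]
      have hM1 : M 1 = 0 := by rw [hMe]; simp [Pi.single_apply]
      have hK0 : K 0 = 0 := by rw [hKe]; simp [Pi.single_apply]
      have hK1 : K 1 = 0 := by rw [hKe]; simp [Pi.single_apply]
      have hmem : ∀ R : O3, R ∈ sg (diagonal d) M K ↔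
          (((R:Mat) 0 2 = 0 ∧ (R:Mat) 1 2 = 0 ∧ (R:Mat) 2 0 = 0 ∧ (R:Mat) 2 1 = 0) ∧
           (R:Mat) 2 2 * M 2 = M 2 ∧ (R:Mat) 2 2 * K 2 = K 2) := by
        intro R
        rw [mem_sg, comm_char_two h01 h2]
        constructor
        · rintro ⟨⟨z02, z12, z20, z21⟩, hMf, hKf⟩
          exact ⟨⟨z02, z12, z20, z21⟩, ((fix_char3 z02 z12 z20 z21 M).mp hMf).2.2,
            ((fix_char3 z02 z12 z20 z21 K).mp hKf).2.2⟩
        · rintro ⟨⟨z02, z12, z20, z21⟩, hM22, hK22⟩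
          refine ⟨⟨z02, z12, z20, z21⟩, ?_, ?_⟩
          · rw [fix_char3 z02 z12 z20 z21]
            exact ⟨by rw [hM0, hM1]; ring, by rw [hM0, hM1]; ring, hM22⟩
          · rw [fix_char3 z02 z12 z20 z21]
            exact ⟨by rw [hK0, hK1]; ring, by rw [hK0, hK1]; ring, hK22⟩
      by_cases hMK2 : M 2 = 0 ∧ K 2 = 0
      · refine Or.inr (Or.inr (Or.inr (Or.inr (Or.inr (Or.inl
          (classify_O2Z2 _ fun R => ?_))))))
        rw [hmem]
        constructor
        · exact fun h => h.1
        · intro hz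
          exact ⟨hz, by rw [hMK2.1]; ring, by rw [hMK2.2]; ring⟩
      · refine Or.inr (Or.inr (Or.inr (Or.inr (Or.inl (classify_O2 _ fun R => ?_)))))
        rw [hmem]
        constructor
        · rintro ⟨⟨z02, z12, z20, z21⟩, hM22, hK22⟩
          have hR22 : (R:Mat) 2 2 = 1 := by
            rcases not_and_or.mp hMK2 with h' | h'
            · exact mul_right_cancel₀ h' (by rw [hM22, one_mul])
            · exact mul_right_cancel₀ h' (by rw [hK22, one_mul])
          rw [pin_iff]
          intro k
          rcases fin3_cases k with rfl | rfl | rfl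
          · rw [if_neg (by decide)]; exact z02
          · rw [if_neg (by decide)]; exact z12
          · rw [if_pos rfl]; exact hR22
        · intro hp2
          obtain ⟨hc2, hd2, hr2⟩ := pin_entries hp2
          exact ⟨⟨hc2 0 (by decide), hc2 1 (by decide), hr2 0 (by decide), hr2 1 (by decide)⟩,
            by rw [hd2]; ring, by rw [hd2]; ring⟩
    · rw [sg_swapMK]
      exact case_two_aux d K M h01 h2 hk
  · exact case_two_aux d M K h01 h2 hm

/-! ### dispatcher over diagonal matrices -/

lemma diag_case (d M K : Fin 3 → ℝ) : Disj (sg (diagonal d) M K) := by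
  by_cases h01 : d 0 = d 1
  · by_cases h20 : d 2 = d 0
    · exact case_scalar d M K h01.symm h20
    · exact case_two d M K h01 h20
  · by_cases h02 : d 0 = d 2
    · refine disj_of_equiv (sgConj (diagonal d) M K (pmO3 (Equiv.swap 1 2))) ?_
      rw [show ((pmO3 (Equiv.swap 1 2) : O3) : Mat) = pm (Equiv.swap 1 2) from rfl,
        pm_conj_diag, pm_mulVec, pm_mulVec]
      refine case_two _ _ _ ?_ ?_
      · show d ((Equiv.swap 1 2 : Equiv.Perm (Fin 3))⁻¹ 0)
          = d ((Equiv.swap 1 2 : Equiv.Perm (Fin 3))⁻¹ 1)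
        rw [show ((Equiv.swap 1 2 : Equiv.Perm (Fin 3))⁻¹ 0) = 0 from by decide,
            show ((Equiv.swap 1 2 : Equiv.Perm (Fin 3))⁻¹ 1) = 2 from by decide]
        exact h02
      · show d ((Equiv.swap 1 2 : Equiv.Perm (Fin 3))⁻¹ 2)
          ≠ d ((Equiv.swap 1 2 : Equiv.Perm (Fin 3))⁻¹ 0)
        rw [show ((Equiv.swap 1 2 : Equiv.Perm (Fin 3))⁻¹ 2) = 1 from by decide,
            show ((Equiv.swap 1 2 : Equiv.Perm (Fin 3))⁻¹ 0) = 0 from by decide]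
        exact fun hc => h01 hc.symm
    · by_cases h12 : d 1 = d 2
      · refine disj_of_equiv (sgConj (diagonal d) M K (pmO3 (Equiv.swap 0 2))) ?_
        rw [show ((pmO3 (Equiv.swap 0 2) : O3) : Mat) = pm (Equiv.swap 0 2) from rfl,
          pm_conj_diag, pm_mulVec, pm_mulVec]
        refine case_two _ _ _ ?_ ?_
        · show d ((Equiv.swap 0 2 : Equiv.Perm (Fin 3))⁻¹ 0)
            = d ((Equiv.swap 0 2 : Equiv.Perm (Fin 3))⁻¹ 1)
          rw [show ((Equiv.swap 0 2 : Equiv.Perm (Fin 3))⁻¹ 0) = 2 from by decide,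
              show ((Equiv.swap 0 2 : Equiv.Perm (Fin 3))⁻¹ 1) = 1 from by decide]
          exact h12.symm
        · show d ((Equiv.swap 0 2 : Equiv.Perm (Fin 3))⁻¹ 2)
            ≠ d ((Equiv.swap 0 2 : Equiv.Perm (Fin 3))⁻¹ 0)
          rw [show ((Equiv.swap 0 2 : Equiv.Perm (Fin 3))⁻¹ 2) = 0 from by decide,
              show ((Equiv.swap 0 2 : Equiv.Perm (Fin 3))⁻¹ 0) = 2 from by decide]
          exact h02
      · exact case_distinct d M K h01 h02 h12

/-! ### the spectral theorem reduction -/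

theorem disj_sg (A : Mat) (hA : A.IsSymm) (M K : Fin 3 → ℝ) : Disj (sg A M K) := by
  have hA' : A.IsHermitian := by
    rw [Matrix.IsHermitian]
    rw [show Aᴴ = Aᵀ from rfl]
    exact hA
  set U : Matrix.unitaryGroup (Fin 3) ℝ := hA'.eigenvectorUnitary with hU
  set Q : O3 := U⁻¹ with hQdef
  have hQco : (Q : Mat) = star (U : Mat) := rfl
  have hQt : (Q : Mat)ᵀ = (U : Mat) := by
    rw [hQco, show star (U : Mat) = (U : Mat)ᵀ from rfl, transpose_transpose]
  have hkey : (Q : Mat) * A * (Q : Mat)ᵀ = diagonal hA'.eigenvalues := by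
    rw [hQt, hQco]
    have := hA'.conjStarAlgAut_star_eigenvectorUnitary
    rw [Unitary.conjStarAlgAut_apply, Unitary.coe_star, star_star] at this
    rw [show (RCLike.ofReal ∘ hA'.eigenvalues) = hA'.eigenvalues from by
      funext i; simp [RCLike.ofReal_real_eq_id]] at this
    exact this
  refine disj_of_equiv (sgConj A M K Q) ?_
  rw [hkey]
  exact diag_case _ _ _

/-- Proposition 2(b) (spacelike reduction): the maximal group of common orthogonal
symmetries of `A`, `M`, `K` is one of: trivial, `Z₂`, `(Z₂)²`, `(Z₂)³`, `O(2)`,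
`O(2) × Z₂`, or `O(3)`. -/
theorem stmt_7 (A : Matrix (Fin 3) (Fin 3) ℝ) (hA : A.IsSymm)
    (M K : Fin 3 → ℝ)
    (G : Subgroup (Matrix.orthogonalGroup (Fin 3) ℝ))
    (hG : ∀ R : Matrix.orthogonalGroup (Fin 3) ℝ,
      R ∈ G ↔ ((R : Matrix (Fin 3) (Fin 3) ℝ) * A * (R : Matrix (Fin 3) (Fin 3) ℝ)ᵀ = A ∧
        (R : Matrix (Fin 3) (Fin 3) ℝ).mulVec M = M ∧
        (R : Matrix (Fin 3) (Fin 3) ℝ).mulVec K = K)) :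
    Nonempty (G ≃* PUnit) ∨
    Nonempty (G ≃* Multiplicative (ZMod 2)) ∨
    Nonempty (G ≃* (Multiplicative (ZMod 2) × Multiplicative (ZMod 2))) ∨
    Nonempty (G ≃* (Multiplicative (ZMod 2) × Multiplicative (ZMod 2) × Multiplicative (ZMod 2))) ∨
    Nonempty (G ≃* Matrix.orthogonalGroup (Fin 2) ℝ) ∨
    Nonempty (G ≃* (Matrix.orthogonalGroup (Fin 2) ℝ × Multiplicative (ZMod 2))) ∨
    Nonempty (G ≃* Matrix.orthogonalGroup (Fin 3) ℝ) := by
  have hGeq : G = sg A M K := Subgroup.ext fun R => (hG R).trans mem_sg.symm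
  rcases disj_of_equiv (MulEquiv.subgroupCongr hGeq) (disj_sg A hA M K) with ⟨⟨f⟩⟩ | h
  · exact Or.inl ⟨f.trans MulEquiv.ofUnique⟩
  · exact Or.inr h
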